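/- arXiv:2405.13618 — 16 statements merged into one kernel-verified Lean document; each statement's English description precedes it below -/
import Mathlib

section
/- For all x > 0 and α with 0 < α ≤ √2/2, α·tanh(x) < arctan(tanh(α·x)). -/
open Real Set

lemma hasDerivAt_tanh' (t : ℝ) : HasDerivAt Real.tanh (1 / Real.cosh t ^ 2) t := by
  have h := (Real.hasDerivAt_sinh t).div (Real.hasDerivAt_cosh t) (Real.cosh_pos t).ne'
  have : (Real.sinh / Real.cosh) = Real.tanh :=
    funext fun x => (Real.tanh_eq_sinh_div_cosh x).symm
  rw [this] at h
  have e : Real.cosh t * Real.cosh t - Real.sinh t * Real.sinh t = 1 := by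
    nlinarith [Real.cosh_sq_sub_sinh_sq t]
  rw [e] at h
  exact h

lemma sinh_ineq : ∀ t ∈ Ioi (0 : ℝ), Real.sqrt 2 * Real.sinh (Real.sqrt 2 * t) < Real.sinh (2 * t) := by
  set s := Real.sqrt 2 with hs
  have hs2 : s ^ 2 = 2 := Real.sq_sqrt (by norm_num)
  have hs_pos : 0 < s := Real.sqrt_pos.mpr (by norm_num)
  have hs_lt : s < 2 := by
    nlinarith [Real.sq_sqrt (show (0:ℝ) ≤ 2 by norm_num)]
  set h : ℝ → ℝ := fun t => Real.sinh (2 * t) - s * Real.sinh (s * t) with hdef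
  have hderiv : ∀ t : ℝ, HasDerivAt h (Real.cosh (2 * t) * 2 - s * (Real.cosh (s * t) * s)) t := by
    intro t
    have hin1 : HasDerivAt (fun y : ℝ => 2 * y) 2 t := by
      simpa using (hasDerivAt_id t).const_mul (2:ℝ)
    have hin2 : HasDerivAt (fun y : ℝ => s * y) s t := by
      simpa using (hasDerivAt_id t).const_mul s
    have h1 : HasDerivAt (fun t : ℝ => Real.sinh (2 * t)) (Real.cosh (2 * t) * 2) t :=
      (Real.hasDerivAt_sinh (2 * t)).comp t hin1
    have h2 : HasDerivAt (fun t : ℝ => Real.sinh (s * t)) (Real.cosh (s * t) * s) t :=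
      (Real.hasDerivAt_sinh (s * t)).comp t hin2
    exact h1.sub (h2.const_mul s)
  have hmono : StrictMonoOn h (Ici 0) := by
    apply strictMonoOn_of_deriv_pos (convex_Ici 0)
    · exact fun t _ => ((hderiv t).continuousAt).continuousWithinAt
    · intro t ht
      rw [interior_Ici] at ht
      rw [(hderiv t).deriv]
      have hc : Real.cosh (s * t) < Real.cosh (2 * t) := by
        have ht' : 0 < t := ht
        rw [Real.cosh_lt_cosh, abs_of_pos (mul_pos hs_pos ht'), abs_of_pos (by linarith)]
        exact mul_lt_mul_of_pos_right hs_lt ht'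
      nlinarith [Real.cosh_pos (s * t)]
  intro t ht
  have := hmono (self_mem_Ici) (mem_Ici.mpr (le_of_lt (mem_Ioi.mp ht))) (mem_Ioi.mp ht)
  simp only [hdef, mul_zero, Real.sinh_zero, sub_zero] at this
  linarith

lemma cosh_sq_ineq : ∀ t ∈ Ioi (0 : ℝ), Real.cosh (Real.sqrt 2 * t) < Real.cosh t ^ 2 := by
  set s := Real.sqrt 2 with hs
  set g : ℝ → ℝ := fun t => Real.cosh t ^ 2 - Real.cosh (s * t) with gdef
  have hderiv : ∀ t : ℝ, HasDerivAt g
      ((2 : ℕ) * Real.cosh t ^ 1 * Real.sinh t - Real.sinh (s * t) * s) t := by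
    intro t
    have h1 : HasDerivAt (fun t : ℝ => Real.cosh t ^ 2)
        ((2 : ℕ) * Real.cosh t ^ 1 * Real.sinh t) t := (Real.hasDerivAt_cosh t).pow 2
    have h2 : HasDerivAt (fun t : ℝ => Real.cosh (s * t)) (Real.sinh (s * t) * s) t := by
      have hin : HasDerivAt (fun y : ℝ => s * y) s t := by
        simpa using (hasDerivAt_id t).const_mul s
      exact (Real.hasDerivAt_cosh (s * t)).comp t hin
    exact h1.sub h2
  have hmono : StrictMonoOn g (Ici 0) := by
    apply strictMonoOn_of_deriv_pos (convex_Ici 0)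
    · exact fun t _ => ((hderiv t).continuousAt).continuousWithinAt
    · intro t ht
      rw [interior_Ici] at ht
      rw [(hderiv t).deriv]
      have := sinh_ineq t ht
      have h2 : Real.sinh (2 * t) = 2 * Real.sinh t * Real.cosh t := Real.sinh_two_mul t
      push_cast
      nlinarith
  intro t ht
  have := hmono (self_mem_Ici) (mem_Ici.mpr (le_of_lt (mem_Ioi.mp ht))) (mem_Ioi.mp ht)
  simp only [gdef, mul_zero, Real.cosh_zero, one_pow, sub_self] at this
  linarith

theorem stmt_0 (x α : ℝ) (hx : 0 < x) (hα : 0 < α) (hα2 : α ≤ Real.sqrt 2 / 2) :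
    α * Real.tanh x < Real.arctan (Real.tanh (α * x)) := by
  set F : ℝ → ℝ := fun t => Real.arctan (Real.tanh (α * t)) - α * Real.tanh t with Fdef
  have hderiv : ∀ t : ℝ, HasDerivAt F
      (1 / (1 + Real.tanh (α * t) ^ 2) * (1 / Real.cosh (α * t) ^ 2 * α)
        - α * (1 / Real.cosh t ^ 2)) t := by
    intro t
    have hin : HasDerivAt (fun y : ℝ => α * y) α t := by
      simpa using (hasDerivAt_id t).const_mul α
    have h1 : HasDerivAt (fun t : ℝ => Real.tanh (α * t)) (1 / Real.cosh (α * t) ^ 2 * α) t :=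
      (hasDerivAt_tanh' (α * t)).comp t hin
    have h2 : HasDerivAt (fun t : ℝ => Real.arctan (Real.tanh (α * t)))
        (1 / (1 + Real.tanh (α * t) ^ 2) * (1 / Real.cosh (α * t) ^ 2 * α)) t :=
      by have := (Real.hasDerivAt_arctan (Real.tanh (α * t))).comp t h1; exact this
    exact h2.sub ((hasDerivAt_tanh' t).const_mul α)
  have key : ∀ t ∈ Ioi (0:ℝ), (0:ℝ) <
      1 / (1 + Real.tanh (α * t) ^ 2) * (1 / Real.cosh (α * t) ^ 2 * α)
        - α * (1 / Real.cosh t ^ 2) := by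
    intro t ht
    have hct : 0 < Real.cosh (α * t) := Real.cosh_pos _
    have hct2 : 0 < Real.cosh t := Real.cosh_pos _
    -- first term equals α / cosh(2αt)
    have htanh : Real.tanh (α * t) = Real.sinh (α * t) / Real.cosh (α * t) :=
      Real.tanh_eq_sinh_div_cosh _
    have hc2 : Real.cosh (2 * (α * t)) = Real.cosh (α*t) ^ 2 + Real.sinh (α*t) ^ 2 :=
      Real.cosh_two_mul _
    have heq : 1 / (1 + Real.tanh (α * t) ^ 2) * (1 / Real.cosh (α * t) ^ 2 * α)
        = α / Real.cosh (2 * (α * t)) := by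
      rw [htanh, hc2]
      field_simp
    rw [heq]
    have hcc : Real.cosh (2 * (α * t)) < Real.cosh t ^ 2 := by
      calc Real.cosh (2 * (α * t)) ≤ Real.cosh (Real.sqrt 2 * t) := by
            rw [Real.cosh_le_cosh]
            have h2a : 2 * α ≤ Real.sqrt 2 := by linarith
            have ht' : 0 < t := ht
            rw [abs_of_nonneg (by nlinarith), abs_of_nonneg
              (mul_nonneg (Real.sqrt_nonneg 2) ht'.le)]
            calc 2 * (α * t) = (2 * α) * t := by ring
              _ ≤ Real.sqrt 2 * t := mul_le_mul_of_nonneg_right h2a (le_of_lt ht)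
        _ < Real.cosh t ^ 2 := cosh_sq_ineq t ht
    have hc2pos : 0 < Real.cosh (2 * (α * t)) := Real.cosh_pos _
    rw [sub_pos, mul_one_div, div_lt_div_iff₀ (by positivity) hc2pos]
    exact mul_lt_mul_of_pos_left hcc hα
  have hmono : StrictMonoOn F (Ici 0) := by
    apply strictMonoOn_of_deriv_pos (convex_Ici 0)
    · exact fun t _ => ((hderiv t).continuousAt).continuousWithinAt
    · intro t ht
      rw [interior_Ici] at ht
      rw [(hderiv t).deriv]
      exact key t ht
  have := hmono (self_mem_Ici) (le_of_lt hx) hx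
  simp only [Fdef, mul_zero, Real.tanh_zero, Real.arctan_zero, sub_zero, sub_self] at this
  linarith
end

section
/- For all x > 0 and α with 0 < α ≤ √2/2, (cosh(αx))² + (sinh(αx))² < (cosh x)². -/
open Real

lemma sinh_strictConvexOn : StrictConvexOn ℝ (Set.Ici (0:ℝ)) Real.sinh := by
  apply strictConvexOn_of_deriv2_pos (convex_Ici 0) Real.continuous_sinh.continuousOn
  intro x hx
  rw [interior_Ici] at hx
  have : (deriv^[2] Real.sinh) = Real.sinh := by
    funext y
    simp [Function.iterate_succ, Real.deriv_sinh, Real.deriv_cosh]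
  rw [show deriv^[2] Real.sinh = Real.sinh from this]
  exact Real.sinh_pos_iff.2 hx

theorem stmt_1 (x α : ℝ) (hx : 0 < x) (hα : 0 < α) (hα2 : α ≤ Real.sqrt 2 / 2) :
    (Real.cosh (α * x)) ^ 2 + (Real.sinh (α * x)) ^ 2 < (Real.cosh x) ^ 2 := by
  set l : ℝ := Real.sqrt 2 / 2 with hl
  have h2 : (0:ℝ) < Real.sqrt 2 := Real.sqrt_pos.2 (by norm_num)
  have hlpos : 0 < l := by positivity
  have hllt : l < 1 := by
    rw [hl, div_lt_one (by norm_num)]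
    nlinarith [Real.sq_sqrt (by norm_num : (2:ℝ) ≥ 0), Real.sqrt_nonneg 2]
  have hlsq : l ^ 2 = 1 / 2 := by
    rw [hl]; rw [div_pow, Real.sq_sqrt (by norm_num : (0:ℝ) ≤ 2)]; norm_num
  -- sinh (l x) < l * sinh x by strict convexity
  have hconv := sinh_strictConvexOn.2 (Set.self_mem_Ici) (Set.mem_Ici.2 hx.le)
    (ne_of_lt hx) (by linarith : 0 < 1 - l) hlpos (by ring)
  simp only [smul_eq_mul, mul_zero, Real.sinh_zero, zero_add, mul_zero, add_zero] at hconv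
  -- hconv : sinh (l * x) < l * sinh x
  have hmono : Real.sinh (α * x) ≤ Real.sinh (l * x) :=
    Real.sinh_le_sinh.2 (by nlinarith)
  have hspos : 0 < Real.sinh (α * x) := Real.sinh_pos_iff.2 (by positivity)
  have hkey : 2 * Real.sinh (α * x) ^ 2 < Real.sinh x ^ 2 := by
    nlinarith [hconv, hmono, hspos, hlsq]
  rw [Real.cosh_sq, Real.cosh_sq]
  linarith
end

section
/- Let S_α(a,b) = α(b−a)/(2·arctan((b^α−a^α)/(b^α+a^α))) for a ≠ b positive. If 1/2 ≤ α ≤ √2/2, then S_α(a,b) < (a+b)/2 for all positive a ≠ b. -/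
open Real

lemma my_continuous_tanh : Continuous Real.tanh := by
  have : Real.tanh = fun x => Real.sinh x / Real.cosh x := funext Real.tanh_eq_sinh_div_cosh
  rw [this]
  exact Real.continuous_sinh.div Real.continuous_cosh fun x => (Real.cosh_pos x).ne'

lemma my_hasDerivAt_tanh (x : ℝ) : HasDerivAt Real.tanh (1 / Real.cosh x ^ 2) x := by
  have h : HasDerivAt (fun y => Real.sinh y / Real.cosh y) _ x :=
    (Real.hasDerivAt_sinh x).div (Real.hasDerivAt_cosh x) (Real.cosh_pos x).ne'
  have e : Real.tanh = fun y => Real.sinh y / Real.cosh y := funext Real.tanh_eq_sinh_div_cosh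
  rw [e]
  convert h using 1
  have h2 := Real.cosh_sq x
  field_simp
  nlinarith [Real.cosh_sq x]

lemma aux_pos {f : ℝ → ℝ} (hc : ContinuousOn f (Set.Ici 0)) (h0 : f 0 = 0)
    (hd : ∀ x ∈ interior (Set.Ici (0:ℝ)), 0 < deriv f x) {y : ℝ} (hy : 0 < y) : 0 < f y := by
  have := strictMonoOn_of_deriv_pos (convex_Ici 0) hc hd Set.self_mem_Ici (Set.mem_Ici.2 hy.le) hy
  rwa [h0] at this

lemma lem2 {y : ℝ} (hy : 0 < y) : Real.tanh (Real.sqrt 2 * y) < Real.sqrt 2 * Real.tanh y := by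
  have hs2 : (1:ℝ) < Real.sqrt 2 := by
    nlinarith [Real.sq_sqrt (by norm_num : (2:ℝ) ≥ 0), Real.sqrt_nonneg 2]
  have key : 0 < Real.sqrt 2 * Real.tanh y - Real.tanh (Real.sqrt 2 * y) := by
    apply aux_pos (f := fun y => Real.sqrt 2 * Real.tanh y - Real.tanh (Real.sqrt 2 * y))
    · exact ((continuous_const.mul my_continuous_tanh).sub
        (my_continuous_tanh.comp (continuous_const.mul continuous_id))).continuousOn
    · simp
    · intro x hx
      rw [interior_Ici] at hx
      have hx : (0:ℝ) < x := hx
      have hinner : HasDerivAt (fun z : ℝ => Real.sqrt 2 * z) (Real.sqrt 2) x := by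
        simpa using (hasDerivAt_id x).const_mul (Real.sqrt 2)
      have hd : HasDerivAt (fun y => Real.sqrt 2 * Real.tanh y - Real.tanh (Real.sqrt 2 * y))
          (Real.sqrt 2 * (1 / Real.cosh x ^ 2) - 1 / Real.cosh (Real.sqrt 2 * x) ^ 2 * Real.sqrt 2) x :=
        ((my_hasDerivAt_tanh x).const_mul (Real.sqrt 2)).sub
          ((my_hasDerivAt_tanh (Real.sqrt 2 * x)).comp x hinner)
      rw [hd.deriv]
      have hcc : Real.cosh x < Real.cosh (Real.sqrt 2 * x) := by
        rw [Real.cosh_lt_cosh, abs_of_pos hx, abs_of_pos (by nlinarith)]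
        nlinarith
      have h1 : 0 < Real.cosh x := Real.cosh_pos x
      have h2 : Real.cosh x ^ 2 < Real.cosh (Real.sqrt 2 * x) ^ 2 := by nlinarith
      have h3 : 1 / Real.cosh (Real.sqrt 2 * x) ^ 2 < 1 / Real.cosh x ^ 2 :=
        one_div_lt_one_div_of_lt (by positivity) h2
      nlinarith [Real.sqrt_pos.mpr (by norm_num : (0:ℝ) < 2)]
    · exact hy
  linarith

lemma lem3 {y : ℝ} (hy : 0 < y) : Real.cosh (Real.sqrt 2 * y) < Real.cosh y ^ 2 := by
  have hsq : Real.sqrt 2 * Real.sqrt 2 = 2 := Real.mul_self_sqrt (by norm_num)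
  have key : 0 < 2 * Real.log (Real.cosh y) - Real.log (Real.cosh (Real.sqrt 2 * y)) := by
    apply aux_pos (f := fun y => 2 * Real.log (Real.cosh y) - Real.log (Real.cosh (Real.sqrt 2 * y)))
    · exact ((continuous_const.mul (Real.continuous_cosh.log fun x => (Real.cosh_pos x).ne')).sub
        ((Real.continuous_cosh.log fun x => (Real.cosh_pos x).ne').comp
          (continuous_const.mul continuous_id))).continuousOn
    · simp
    · intro x hx
      rw [interior_Ici] at hx
      have hx : (0:ℝ) < x := hx
      have hinner : HasDerivAt (fun z : ℝ => Real.sqrt 2 * z) (Real.sqrt 2) x := by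
        simpa using (hasDerivAt_id x).const_mul (Real.sqrt 2)
      have hd1 : HasDerivAt (fun y => Real.log (Real.cosh y)) (Real.sinh x / Real.cosh x) x :=
        (Real.hasDerivAt_cosh x).log (Real.cosh_pos x).ne'
      have hd2 : HasDerivAt (fun y => Real.log (Real.cosh (Real.sqrt 2 * y)))
          (Real.sinh (Real.sqrt 2 * x) / Real.cosh (Real.sqrt 2 * x) * Real.sqrt 2) x :=
        (((Real.hasDerivAt_cosh _).log (Real.cosh_pos _).ne').comp x hinner)
      have hd : HasDerivAt (fun y => 2 * Real.log (Real.cosh y) - Real.log (Real.cosh (Real.sqrt 2 * y)))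
          (2 * (Real.sinh x / Real.cosh x) - Real.sinh (Real.sqrt 2 * x) / Real.cosh (Real.sqrt 2 * x) * Real.sqrt 2) x :=
        (hd1.const_mul 2).sub hd2
      rw [hd.deriv]
      have ht := lem2 hx
      rw [Real.tanh_eq_sinh_div_cosh, Real.tanh_eq_sinh_div_cosh] at ht
      have hs2 : 0 < Real.sqrt 2 := Real.sqrt_pos.mpr (by norm_num)
      have h4 := mul_lt_mul_of_pos_left ht hs2
      have h5 : Real.sqrt 2 * (Real.sqrt 2 * (Real.sinh x / Real.cosh x))
          = 2 * (Real.sinh x / Real.cosh x) := by rw [← mul_assoc, hsq]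
      rw [h5] at h4
      linarith [h4]
    · exact hy
  have h1 : Real.log (Real.cosh (Real.sqrt 2 * y)) < Real.log (Real.cosh y ^ 2) := by
    rw [Real.log_pow]; push_cast; linarith
  have := Real.exp_lt_exp.mpr h1
  rwa [Real.exp_log (Real.cosh_pos _), Real.exp_log (by positivity)] at this

lemma lem5 {α s : ℝ} (hα : 0 < α) (hle : Real.sqrt 2 ≤ 1 / α) (hs : 0 < s) :
    α * Real.tanh (s / α) < Real.arctan (Real.tanh s) := by
  have hsq : Real.sqrt 2 * Real.sqrt 2 = 2 := Real.mul_self_sqrt (by norm_num)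
  have hs2 : 0 < Real.sqrt 2 := Real.sqrt_pos.mpr (by norm_num)
  have key : 0 < Real.arctan (Real.tanh s) - α * Real.tanh (s / α) := by
    apply aux_pos (f := fun s => Real.arctan (Real.tanh s) - α * Real.tanh (s / α))
    · exact ((Real.continuous_arctan.comp my_continuous_tanh).sub
        (continuous_const.mul (my_continuous_tanh.comp (continuous_id.div_const α)))).continuousOn
    · simp
    · intro x hx
      rw [interior_Ici] at hx
      have hx : (0:ℝ) < x := hx
      have hinner : HasDerivAt (fun z : ℝ => z / α) (1 / α) x := by
        simpa using (hasDerivAt_id x).div_const α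
      have hd1 : HasDerivAt (fun s => Real.arctan (Real.tanh s))
          (1 / (1 + Real.tanh x ^ 2) * (1 / Real.cosh x ^ 2)) x :=
        (Real.hasDerivAt_arctan (Real.tanh x)).comp x (my_hasDerivAt_tanh x)
      have hd2 : HasDerivAt (fun s => α * Real.tanh (s / α))
          (α * (1 / Real.cosh (x / α) ^ 2 * (1 / α))) x :=
        (HasDerivAt.comp (h₂ := Real.tanh) x (my_hasDerivAt_tanh (x / α)) hinner).const_mul α
      have hd : HasDerivAt (fun s => Real.arctan (Real.tanh s) - α * Real.tanh (s / α)) _ x :=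
        hd1.sub hd2
      rw [hd.deriv]
      -- key comparison : cosh(x/α)^2 > (1 + tanh x^2) * cosh x ^2
      have hch : Real.cosh (Real.sqrt 2 * x) ≤ Real.cosh (x / α) := by
        rw [Real.cosh_le_cosh, abs_of_pos (by positivity), abs_of_pos (by positivity)]
        rw [div_eq_mul_inv, mul_comm]
        have : Real.sqrt 2 ≤ α⁻¹ := by simpa [one_div] using hle
        simpa [mul_comm] using mul_le_mul_of_nonneg_right this hx.le
      have h3 := lem3 (mul_pos hs2 hx)
      rw [← mul_assoc, hsq] at h3
      have hcosh2 : Real.cosh (2 * x) = Real.cosh x ^ 2 + Real.sinh x ^ 2 := Real.cosh_two_mul x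
      have hcp : 0 < Real.cosh x := Real.cosh_pos x
      have hT : (1 + Real.tanh x ^ 2) * Real.cosh x ^ 2 = Real.cosh x ^ 2 + Real.sinh x ^ 2 := by
        rw [Real.tanh_eq_sinh_div_cosh]
        field_simp
      have hmain : (1 + Real.tanh x ^ 2) * Real.cosh x ^ 2 < Real.cosh (x / α) ^ 2 := by
        rw [hT, ← hcosh2]
        calc Real.cosh (2 * x) < Real.cosh (Real.sqrt 2 * x) ^ 2 := h3
          _ ≤ Real.cosh (x / α) ^ 2 := by nlinarith [Real.cosh_pos (Real.sqrt 2 * x)]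
      have e2 : α * (1 / Real.cosh (x / α) ^ 2 * (1 / α)) = 1 / Real.cosh (x / α) ^ 2 := by
        field_simp
      have e1 : 1 / (1 + Real.tanh x ^ 2) * (1 / Real.cosh x ^ 2)
          = 1 / ((1 + Real.tanh x ^ 2) * Real.cosh x ^ 2) := by
        rw [one_div_mul_one_div]
      rw [e1, e2]
      have hpos : 0 < (1 + Real.tanh x ^ 2) * Real.cosh x ^ 2 := by positivity
      have := one_div_lt_one_div_of_lt hpos hmain
      linarith
    · exact hs
  linarith

lemma tanh_half_log {x y : ℝ} (hx : 0 < x) (hy : 0 < y) :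
    Real.tanh ((Real.log y - Real.log x) / 2) = (y - x) / (y + x) := by
  set z := (Real.log y - Real.log x) / 2 with hz
  have hw : 0 < Real.exp z := Real.exp_pos z
  have hw2 : Real.exp z ^ 2 * x = y := by
    rw [sq, ← Real.exp_add]
    have : z + z = Real.log y - Real.log x := by rw [hz]; ring
    rw [this, Real.exp_sub, Real.exp_log hy, Real.exp_log hx]
    field_simp
  rw [Real.tanh_eq_sinh_div_cosh, Real.sinh_eq, Real.cosh_eq, Real.exp_neg]
  have h1 : Real.exp z + (Real.exp z)⁻¹ ≠ 0 := by positivity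
  have h2 : (y + x) ≠ 0 := by positivity
  rw [div_eq_div_iff (by positivity) h2]
  field_simp
  nlinarith [hw2, hw]

lemma key_lt {α a b : ℝ} (hα1 : 1 / 2 ≤ α) (hα2 : α ≤ Real.sqrt 2 / 2)
    (ha : 0 < a) (hab : a < b) :
    α * (b - a) / (2 * Real.arctan ((b ^ α - a ^ α) / (b ^ α + a ^ α))) < (a + b) / 2 := by
  have hb : 0 < b := ha.trans hab
  have hαpos : 0 < α := by linarith
  have hle : Real.sqrt 2 ≤ 1 / α := by
    have h1 := one_div_le_one_div_of_le hαpos hα2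
    have h2 : (1:ℝ) / (Real.sqrt 2 / 2) = Real.sqrt 2 := by
      rw [one_div_div, Real.div_sqrt]
    linarith [h2 ▸ h1]
  set L : ℝ := (Real.log b - Real.log a) / 2 with hLdef
  have hL : 0 < L := by
    have := Real.log_lt_log ha hab
    simp only [hLdef]; linarith
  have hs : 0 < α * L := mul_pos hαpos hL
  have fact1 : Real.tanh L = (b - a) / (b + a) := tanh_half_log ha hb
  have fact2 : (b ^ α - a ^ α) / (b ^ α + a ^ α) = Real.tanh (α * L) := by
    have h := tanh_half_log (Real.rpow_pos_of_pos ha α) (Real.rpow_pos_of_pos hb α)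
    rw [Real.log_rpow hb, Real.log_rpow ha] at h
    rw [← h]
    congr 1
    rw [hLdef]; ring
  have htanh_pos : 0 < Real.tanh (α * L) := by
    rw [Real.tanh_eq_sinh_div_cosh]
    exact div_pos (Real.sinh_pos_iff.mpr hs) (Real.cosh_pos _)
  have harc : 0 < Real.arctan (Real.tanh (α * L)) := by simpa using Real.arctan_strictMono htanh_pos
  have hmain : α * Real.tanh L < Real.arctan (Real.tanh (α * L)) := by
    have h := lem5 hαpos hle hs
    rwa [mul_div_cancel_left₀ _ hαpos.ne'] at h
  rw [fact2, div_lt_div_iff₀ (by linarith) (by norm_num : (0:ℝ) < 2)]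
  have hba : b - a = (b + a) * Real.tanh L := by
    rw [fact1]
    field_simp
  rw [hba]
  nlinarith [mul_lt_mul_of_pos_left hmain (by linarith : (0:ℝ) < 2 * (b + a))]

theorem stmt_2 (α a b : ℝ) (hα1 : 1 / 2 ≤ α) (hα2 : α ≤ Real.sqrt 2 / 2)
    (ha : 0 < a) (hb : 0 < b) (hab : a ≠ b) :
    α * (b - a) / (2 * Real.arctan ((b ^ α - a ^ α) / (b ^ α + a ^ α))) < (a + b) / 2 := by
  rcases lt_or_gt_of_ne hab with h | h
  · exact key_lt hα1 hα2 ha h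
  · have hk := key_lt hα1 hα2 hb h
    have e1 : (b ^ α - a ^ α) / (b ^ α + a ^ α) = -((a ^ α - b ^ α) / (a ^ α + b ^ α)) := by
      ring
    have e : α * (b - a) / (2 * Real.arctan ((b ^ α - a ^ α) / (b ^ α + a ^ α)))
        = α * (a - b) / (2 * Real.arctan ((a ^ α - b ^ α) / (a ^ α + b ^ α))) := by
      rw [e1, Real.arctan_neg]
      ring
    rw [e]
    linarith [hk]
end

section
/- For fixed positive reals a ≠ b, the map α ↦ L_α(a,b) = 2α·a^α·b^α·(b−a)/(b^{2α}−a^{2α}) is strictly decreasing for α ∈ (0,1]. -/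
open Real Set

lemma sinh_lt_mul_cosh {u : ℝ} (hu : 0 < u) : Real.sinh u < u * Real.cosh u := by
  have h : StrictMonoOn (fun x => x * Real.cosh x - Real.sinh x) (Set.Ici 0) := by
    apply strictMonoOn_of_deriv_pos (convex_Ici 0)
    · fun_prop
    · intro x hx
      rw [interior_Ici] at hx
      have hd : HasDerivAt (fun x : ℝ => x * Real.cosh x - Real.sinh x) (x * Real.sinh x) x := by
        have h1 : HasDerivAt (fun x : ℝ => x * Real.cosh x)
            (1 * Real.cosh x + x * Real.sinh x) x :=
          (hasDerivAt_id x).mul (Real.hasDerivAt_cosh x)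
        have h2 := Real.hasDerivAt_sinh x
        refine (h1.sub h2).congr_deriv ?_; ring
      rw [hd.deriv]
      exact mul_pos hx (Real.sinh_pos_iff.2 hx)
  have := h Set.self_mem_Ici (Set.mem_Ici.2 hu.le) hu
  simpa using this

lemma sinh_div_strictMono : StrictMonoOn (fun u => Real.sinh u / u) (Set.Ioi 0) := by
  apply strictMonoOn_of_deriv_pos (convex_Ioi 0)
  · exact Real.continuous_sinh.continuousOn.div continuousOn_id
      (fun x hx => ne_of_gt hx)
  · intro x hx
    rw [interior_Ioi] at hx
    have hx0 : x ≠ 0 := ne_of_gt hx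
    have hd : HasDerivAt (fun u => Real.sinh u / u)
        ((Real.cosh x * x - Real.sinh x * 1) / x ^ 2) x :=
      (Real.hasDerivAt_sinh x).div (hasDerivAt_id x) hx0
    rw [hd.deriv]
    apply div_pos
    · nlinarith [sinh_lt_mul_cosh hx]
    · positivity

lemma div_sinh_anti {s t : ℝ} (hs : 0 < s) (hst : s < t) :
    t / Real.sinh t < s / Real.sinh s := by
  have ht : 0 < t := hs.trans hst
  have h := sinh_div_strictMono (Set.mem_Ioi.2 hs) (Set.mem_Ioi.2 ht) hst
  have hss : 0 < Real.sinh s := Real.sinh_pos_iff.2 hs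
  have htt : 0 < Real.sinh t := Real.sinh_pos_iff.2 ht
  rw [div_lt_div_iff₀ htt hss]
  rw [div_lt_div_iff₀ hs ht] at h
  nlinarith

lemma main_lt (a b : ℝ) (ha : 0 < a) (hab : a < b) :
    StrictAntiOn (fun α : ℝ => 2 * α * a ^ α * b ^ α * (b - a) / (b ^ (2 * α) - a ^ (2 * α)))
      (Set.Ioc 0 1) := by
  have hb : 0 < b := ha.trans hab
  set c := Real.log (b / a) with hc
  have hc0 : 0 < c := Real.log_pos ((one_lt_div ha).2 hab)
  have key : ∀ α : ℝ, 0 < α →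
      2 * α * a ^ α * b ^ α * (b - a) / (b ^ (2 * α) - a ^ (2 * α))
        = (b - a) * (α * c / Real.sinh (α * c)) / c := by
    intro α hα
    have hea : (0:ℝ) < a ^ α := Real.rpow_pos_of_pos ha α
    have heb : (0:ℝ) < b ^ α := Real.rpow_pos_of_pos hb α
    have hsinh : Real.sinh (α * c) = (b ^ α / a ^ α - a ^ α / b ^ α) / 2 := by
      rw [Real.sinh_eq]
      have h1 : Real.exp (α * c) = b ^ α / a ^ α := by
        rw [hc, mul_comm, ← Real.rpow_def_of_pos (div_pos hb ha),
          Real.div_rpow hb.le ha.le]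
      have h2 : Real.exp (-(α * c)) = a ^ α / b ^ α := by
        rw [Real.exp_neg, h1, inv_div]
      rw [h1, h2]
    have h2a : a ^ (2 * α) = a ^ α * a ^ α := by rw [two_mul, Real.rpow_add ha]
    have h2b : b ^ (2 * α) = b ^ α * b ^ α := by rw [two_mul, Real.rpow_add hb]
    have hlt : a ^ α < b ^ α := Real.rpow_lt_rpow ha.le hab hα
    have hne : b ^ α * b ^ α - a ^ α * a ^ α ≠ 0 := by nlinarith
    have hsne : Real.sinh (α * c) ≠ 0 := ne_of_gt (Real.sinh_pos_iff.2 (mul_pos hα hc0))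
    rw [hsinh] at hsne
    rw [h2a, h2b, hsinh]
    field_simp
  intro x hx y hy hxy
  simp only
  rw [key x hx.1, key y hy.1]
  have hba : 0 < b - a := sub_pos.2 hab
  have h := div_sinh_anti (mul_pos hx.1 hc0) (mul_lt_mul_of_pos_right hxy hc0)
  gcongr

theorem stmt_3 (a b : ℝ) (ha : 0 < a) (hb : 0 < b) (hab : a ≠ b) :
    StrictAntiOn (fun α : ℝ => 2 * α * a ^ α * b ^ α * (b - a) / (b ^ (2 * α) - a ^ (2 * α)))
      (Set.Ioc 0 1) := by
  rcases lt_or_gt_of_ne hab with h | h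
  · exact main_lt a b ha h
  · have heq : (fun α : ℝ => 2 * α * a ^ α * b ^ α * (b - a) / (b ^ (2 * α) - a ^ (2 * α)))
        = (fun α : ℝ => 2 * α * b ^ α * a ^ α * (a - b) / (a ^ (2 * α) - b ^ (2 * α))) := by
      funext α
      rw [show b - a = -(a - b) by ring,
        show b ^ (2 * α) - a ^ (2 * α) = -(a ^ (2 * α) - b ^ (2 * α)) by ring,
        mul_neg, neg_div_neg_eq, mul_right_comm (2*α) (a ^ α) (b ^ α)]
    rw [heq]
    exact main_lt b a hb h
end

section
/- For fixed positive reals a ≠ b, the map α ↦ S_α(a,b) = α(b−a)/(2·arctan((b^α−a^α)/(b^α+a^α))) is strictly increasing for α ∈ (0,1]. -/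
open Real Set

/-- G x = arctan (tanh x) -/
noncomputable def Gfun (x : ℝ) : ℝ := Real.arctan (Real.tanh x)

lemma hasDerivAt_Gfun (x : ℝ) : HasDerivAt Gfun (1 / Real.cosh (2 * x)) x := by
  have htanh : HasDerivAt Real.tanh (1 / Real.cosh x ^ 2) x := by
    have h : HasDerivAt (fun y => Real.sinh y / Real.cosh y)
        ((Real.cosh x * Real.cosh x - Real.sinh x * Real.sinh x) / Real.cosh x ^ 2) x :=
      (Real.hasDerivAt_sinh x).div (Real.hasDerivAt_cosh x) (Real.cosh_pos x).ne'
    have heq : Real.tanh = fun y => Real.sinh y / Real.cosh y := by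
      funext y; exact Real.tanh_eq_sinh_div_cosh y
    rw [heq]
    convert h using 1
    have h2 : Real.cosh x * Real.cosh x - Real.sinh x * Real.sinh x = 1 := by
      have := Real.cosh_sq_sub_sinh_sq x
      ring_nf at this ⊢
      linarith
    rw [h2]
  have harctan := Real.hasDerivAt_arctan (Real.tanh x)
  have := harctan.comp x htanh
  refine this.congr_deriv ?_
  rw [Real.cosh_two_mul, Real.tanh_eq_sinh_div_cosh]
  have hc := Real.cosh_pos x
  field_simp

lemma Gfun_pos {x : ℝ} (hx : 0 < x) : 0 < Gfun x := by
  have ht : 0 < Real.tanh x := by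
    rw [Real.tanh_eq_sinh_div_cosh]
    exact div_pos (Real.sinh_pos_iff.mpr hx) (Real.cosh_pos x)
  have := Real.arctan_strictMono (show (0:ℝ) < Real.tanh x from ht)
  simpa [Gfun, Real.arctan_zero] using this

lemma Gfun_concave : StrictConcaveOn ℝ (Set.Ici (0:ℝ)) Gfun := by
  apply StrictAntiOn.strictConcaveOn_of_deriv (convex_Ici 0)
  · have htanh : Continuous Real.tanh := by
      have heq : Real.tanh = fun x => Real.sinh x / Real.cosh x :=
        funext Real.tanh_eq_sinh_div_cosh
      rw [heq]
      exact Real.continuous_sinh.div Real.continuous_cosh fun x => (Real.cosh_pos x).ne'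
    exact (Real.continuous_arctan.comp htanh).continuousOn
  · rw [interior_Ici]
    intro x hx y hy hxy
    rw [(hasDerivAt_Gfun x).deriv, (hasDerivAt_Gfun y).deriv]
    apply one_div_lt_one_div_of_lt (Real.cosh_pos _)
    rw [Real.cosh_lt_cosh]
    rw [mem_Ioi] at hx hy
    rw [abs_of_pos (by linarith), abs_of_pos (by linarith)]
    linarith

/-- for 0 < x < y, y * G x > x * G y -/
lemma Gfun_slope {x y : ℝ} (hx : 0 < x) (hxy : x < y) : x * Gfun y < y * Gfun x := by
  have hy : 0 < y := hx.trans hxy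
  have key := Gfun_concave.2 (Set.mem_Ici.mpr le_rfl)
      (Set.mem_Ici.mpr hy.le) hy.ne
      (show 0 < 1 - x / y by
        have : x / y < 1 := (div_lt_one hy).mpr hxy; linarith)
      (div_pos hx hy) (show (1 - x / y) + x / y = 1 by ring)
  have hG0 : Gfun 0 = 0 := by simp [Gfun]
  simp only [smul_eq_mul, mul_zero, hG0, zero_add, zero_mul] at key
  have hxval : (x / y) * y = x := by field_simp
  rw [hxval] at key
  have := (div_lt_iff₀ hy).mp (by
    have : x / y * Gfun y < Gfun x := by linarith
    calc x * Gfun y / y = x / y * Gfun y := by ring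
    _ < Gfun x := this)
  linarith

lemma ratio_eq (p : ℝ) (hp : 0 < p) (q : ℝ) (hq : 0 < q) (α : ℝ) :
    (p ^ α - q ^ α) / (p ^ α + q ^ α) =
      Real.tanh (α * ((Real.log p - Real.log q) / 2)) := by
  set u := α * Real.log p with hu
  set v := α * Real.log q with hv
  have hpα : p ^ α = Real.exp u := by rw [Real.rpow_def_of_pos hp, hu]; ring_nf
  have hqα : q ^ α = Real.exp v := by rw [Real.rpow_def_of_pos hq, hv]; ring_nf
  set d := α * ((Real.log p - Real.log q) / 2) with hd
  have hd2 : u - d = v + d := by rw [hu, hv, hd]; ring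
  have h1 : Real.exp u * Real.exp (-d) = Real.exp v * Real.exp d := by
    rw [← Real.exp_add, ← Real.exp_add]
    congr 1
  rw [hpα, hqα, Real.tanh_eq_sinh_div_cosh, Real.sinh_eq, Real.cosh_eq]
  rw [div_div_div_cancel_right₀ (two_ne_zero)]
  rw [div_eq_div_iff (by positivity) (by positivity)]
  linear_combination 2 * h1

lemma key_mono (a b : ℝ) (ha : 0 < a) (hb : 0 < b) (hab : a < b) :
    StrictMonoOn (fun α : ℝ => α * (b - a) / (2 * Real.arctan ((b ^ α - a ^ α) / (b ^ α + a ^ α))))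
      (Set.Ioc 0 1) := by
  set c := (Real.log b - Real.log a) / 2 with hc
  have hcpos : 0 < c := by
    have := Real.log_lt_log ha hab
    rw [hc]; linarith
  intro α hα β hβ hαβ
  simp only
  rw [ratio_eq b hb a ha α, ratio_eq b hb a ha β]
  have hα0 : 0 < α := hα.1
  have hβ0 : 0 < β := hβ.1
  have hGα : 0 < Gfun (α * c) := Gfun_pos (by positivity)
  have hGβ : 0 < Gfun (β * c) := Gfun_pos (by positivity)
  have hslope : (α * c) * Gfun (β * c) < (β * c) * Gfun (α * c) :=
    Gfun_slope (by positivity) (by nlinarith)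
  have hba : 0 < b - a := by linarith
  show α * (b - a) / (2 * Gfun (α * c)) < β * (b - a) / (2 * Gfun (β * c))
  rw [div_lt_div_iff₀ (by positivity) (by positivity)]
  nlinarith [mul_pos hba hcpos]

theorem stmt_4 (a b : ℝ) (ha : 0 < a) (hb : 0 < b) (hab : a ≠ b) :
    StrictMonoOn (fun α : ℝ => α * (b - a) / (2 * Real.arctan ((b ^ α - a ^ α) / (b ^ α + a ^ α))))
      (Set.Ioc 0 1) := by
  rcases lt_or_gt_of_ne hab with h | h
  · exact key_mono a b ha hb h
  · have heq : (fun α : ℝ => α * (b - a) / (2 * Real.arctan ((b ^ α - a ^ α) / (b ^ α + a ^ α))))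
        = (fun α : ℝ => α * (a - b) / (2 * Real.arctan ((a ^ α - b ^ α) / (a ^ α + b ^ α)))) := by
      funext α
      have h1 : (b:ℝ) ^ α - a ^ α = -((a:ℝ) ^ α - b ^ α) := by ring
      have h2 : (b:ℝ) ^ α + a ^ α = (a:ℝ) ^ α + b ^ α := by ring
      rw [h1, h2, neg_div, Real.arctan_neg, mul_neg, div_neg, ← neg_div]
      ring_nf
    rw [heq]
    exact key_mono b a hb ha h
end

section
/- For all x > 0, arcsinh(1+2x) − arcsinh(x√2) − arcsinh(1) < 0. -/
theorem stmt_6 (x : ℝ) (hx : 0 < x) :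
    Real.arsinh (1 + 2 * x) - Real.arsinh (x * Real.sqrt 2) - Real.arsinh 1 < 0 := by
  rw [sub_sub, sub_neg, ← Real.sinh_lt_sinh, Real.sinh_arsinh, Real.sinh_add,
    Real.sinh_arsinh, Real.cosh_arsinh, Real.sinh_arsinh, Real.cosh_arsinh]
  have h2 : Real.sqrt 2 * Real.sqrt 2 = 2 := Real.mul_self_sqrt (by norm_num)
  have hsq : (x * Real.sqrt 2) ^ 2 = 2 * x ^ 2 := by
    rw [mul_pow, Real.sq_sqrt (by norm_num : (2:ℝ) ≥ 0)]; ring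
  have h1 : (1 : ℝ) < Real.sqrt (1 + (x * Real.sqrt 2) ^ 2) := by
    rw [hsq, show (1:ℝ) < Real.sqrt (1 + 2 * x ^ 2) ↔ 1 ^ 2 < 1 + 2 * x ^ 2 from
      Real.lt_sqrt (by norm_num)]
    nlinarith
  have hs : Real.sqrt (1 + 1 ^ 2) = Real.sqrt 2 := by norm_num
  have h3 : x * Real.sqrt 2 * Real.sqrt 2 = 2 * x := by
    rw [mul_assoc, h2]; ring
  rw [hs]
  nlinarith [h1, h3]
end

section
/- For all x > 0, arcsinh(1+2x) − arcsinh(1) < ln(1+2x); equivalently M_5(a,b) < M_1(a,b) for positive a ≠ b, where M_1(a,b) = |b−a|/ln(1+|ln b − ln a|) and M_5(a,b) = |b−a|/(√2(arcsinh(1+|ln b − ln a|) − arcsinh 1)). -/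
open Real Set

lemma key1 (y : ℝ) (hy : 1 < y) :
    Real.arsinh y - Real.arsinh 1 < Real.log y := by
  have hy0 : 0 < y := by linarith
  have hsq2 : (1:ℝ) ≤ Real.sqrt 2 := by
    nlinarith [Real.sq_sqrt (by norm_num : (0:ℝ) ≤ 2), Real.sqrt_nonneg 2]
  rw [Real.arsinh, Real.arsinh]
  have h1 : Real.sqrt (1 + 1^2) = Real.sqrt 2 := by norm_num
  have hs : Real.sqrt (1 + y^2) < Real.sqrt 2 * y := by
    rw [show Real.sqrt 2 * y = Real.sqrt (2 * y^2) by
      rw [Real.sqrt_mul (by norm_num : (0:ℝ) ≤ 2), Real.sqrt_sq hy0.le]]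
    apply Real.sqrt_lt_sqrt (by positivity)
    nlinarith
  have h2 : y + Real.sqrt (1 + y^2) < (1 + Real.sqrt 2) * y := by nlinarith
  have hpos : 0 < y + Real.sqrt (1 + y^2) := by positivity
  have hl := Real.log_lt_log hpos h2
  rw [Real.log_mul (by positivity) (by positivity)] at hl
  rw [h1]
  linarith

lemma key2 (t : ℝ) (ht : 0 < t) :
    Real.log (1 + t) < Real.sqrt 2 * (Real.arsinh (1 + t) - Real.arsinh 1) := by
  set g : ℝ → ℝ := fun x => Real.sqrt 2 * Real.arsinh (1 + x) - Real.log (1 + x) with hg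
  have hderiv : ∀ x ∈ interior (Set.Ici (0:ℝ)), 0 < deriv g x := by
    intro x hx
    rw [interior_Ici] at hx
    have hx0 : (0:ℝ) < x := hx
    have hx1 : (0:ℝ) < 1 + x := by linarith
    have hA : HasDerivAt (fun x : ℝ => Real.arsinh (1 + x))
        ((Real.sqrt (1 + (1 + x)^2))⁻¹ * 1) x :=
      (Real.hasDerivAt_arsinh (1 + x)).comp x ((hasDerivAt_id x).const_add 1)
    have hL : HasDerivAt (fun x : ℝ => Real.log (1 + x)) ((1 + x)⁻¹ * 1) x :=
      (Real.hasDerivAt_log hx1.ne').comp x ((hasDerivAt_id x).const_add 1)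
    have hG : HasDerivAt g
        (Real.sqrt 2 * ((Real.sqrt (1 + (1 + x)^2))⁻¹ * 1) - (1 + x)⁻¹ * 1) x :=
      (hA.const_mul (Real.sqrt 2)).sub hL
    rw [hG.deriv]
    have hspos : 0 < Real.sqrt (1 + (1 + x)^2) := Real.sqrt_pos.mpr (by positivity)
    have hkey : Real.sqrt (1 + (1 + x)^2) < Real.sqrt 2 * (1 + x) := by
      rw [show Real.sqrt 2 * (1 + x) = Real.sqrt (2 * (1 + x)^2) by
        rw [Real.sqrt_mul (by norm_num : (0:ℝ) ≤ 2), Real.sqrt_sq hx1.le]]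
      apply Real.sqrt_lt_sqrt (by positivity)
      nlinarith
    rw [mul_one, mul_one, sub_pos]
    rw [← div_eq_mul_inv, lt_div_iff₀ hspos, inv_mul_eq_div, div_lt_iff₀ hx1]
    linarith
  have hcont : ContinuousOn g (Set.Ici (0:ℝ)) := by
    apply ContinuousOn.sub
    · exact (continuous_const.mul (Real.continuous_arsinh.comp
        (continuous_const.add continuous_id))).continuousOn
    · apply Real.continuousOn_log.comp (continuous_const.add continuous_id).continuousOn
      intro x hx
      simp only [Set.mem_compl_iff, Set.mem_singleton_iff]
      have : (0:ℝ) ≤ x := hx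
      intro h; simp at h; linarith
  have hmono : StrictMonoOn g (Set.Ici (0:ℝ)) :=
    strictMonoOn_of_deriv_pos (convex_Ici 0) hcont hderiv
  have := hmono (Set.self_mem_Ici) (Set.mem_Ici.mpr ht.le) ht
  simp only [hg] at this
  norm_num at this
  linarith [this]

theorem stmt_7 :
    (∀ x : ℝ, 0 < x →
      Real.arsinh (1 + 2 * x) - Real.arsinh 1 < Real.log (1 + 2 * x)) ∧
    (∀ a b : ℝ, 0 < a → 0 < b → a ≠ b →
      |b - a| / (Real.sqrt 2 * (Real.arsinh (1 + |Real.log b - Real.log a|) - Real.arsinh 1)) <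
        |b - a| / Real.log (1 + |Real.log b - Real.log a|)) := by
  constructor
  · intro x hx
    exact key1 (1 + 2 * x) (by linarith)
  · intro a b ha hb hab
    set t := |Real.log b - Real.log a| with htdef
    have ht : 0 < t := by
      apply abs_pos.mpr
      intro h
      exact hab ((Real.log_injOn_pos (Set.mem_Ioi.mpr hb) (Set.mem_Ioi.mpr ha)
        (by linarith)).symm)
    have hnum : 0 < |b - a| := abs_pos.mpr (sub_ne_zero.mpr (Ne.symm hab))
    have hlog : 0 < Real.log (1 + t) := Real.log_pos (by linarith)
    have hk2 := key2 t ht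
    exact div_lt_div_of_pos_left hnum hlog hk2
end

section
/- For all x > 0, 2(arctan(1+2x) − π/4) < ln(1+2x); equivalently M_1(a,b) < M_3(a,b) for positive a ≠ b, where M_1(a,b) = |b−a|/ln(1+|ln b − ln a|) and M_3(a,b) = |b−a|/(2·arctan(1+|ln b − ln a|) − π/2). -/
open Real

lemma aux_deriv (x : ℝ) (hx : 0 < 1 + 2 * x) :
    HasDerivAt (fun y : ℝ => Real.log (1 + 2 * y) - 2 * Real.arctan (1 + 2 * y))
      (2 / (1 + 2 * x) - 2 * (1 / (1 + (1 + 2 * x) ^ 2)) * 2) x := by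
  have h1 : HasDerivAt (fun y : ℝ => 1 + 2 * y) 2 x := by
    simpa using ((hasDerivAt_id x).const_mul 2).const_add 1
  have hlog : HasDerivAt (fun y : ℝ => Real.log (1 + 2 * y)) (2 / (1 + 2 * x)) x := by
    have := (Real.hasDerivAt_log hx.ne').comp x h1
    simpa [div_eq_inv_mul, Function.comp_def] using this
  have harc : HasDerivAt (fun y : ℝ => Real.arctan (1 + 2 * y))
      ((1 / (1 + (1 + 2 * x) ^ 2)) * 2) x := by
    have := (Real.hasDerivAt_arctan (1 + 2 * x)).comp x h1
    simpa [Function.comp_def] using this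
  exact (hlog.sub (harc.const_mul 2)).congr_deriv (by ring)

lemma key (x : ℝ) (hx : 0 < x) :
    2 * (Real.arctan (1 + 2 * x) - Real.pi / 4) < Real.log (1 + 2 * x) := by
  set F : ℝ → ℝ := fun y => Real.log (1 + 2 * y) - 2 * Real.arctan (1 + 2 * y) with hF
  have hmono : StrictMonoOn F (Set.Ici 0) := by
    apply strictMonoOn_of_deriv_pos (convex_Ici 0)
    · apply ContinuousOn.sub
      · apply ContinuousOn.log (by fun_prop)
        intro y hy
        simp only [Set.mem_Ici] at hy
        nlinarith
      · exact (continuous_const.mul (Real.continuous_arctan.comp (by continuity : Continuous fun y : ℝ => 1 + 2 * y))).continuousOn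
    · intro y hy
      rw [interior_Ici] at hy
      simp only [Set.mem_Ioi] at hy
      have hpos : (0:ℝ) < 1 + 2 * y := by linarith
      rw [(aux_deriv y hpos).deriv]
      rw [sub_pos, show (2:ℝ) * (1 / (1 + (1 + 2 * y) ^ 2)) * 2 = 4 / (1 + (1 + 2 * y) ^ 2) by ring,
        div_lt_div_iff₀ (by positivity) (by positivity)]
      nlinarith
  have h0 : F 0 < F x := hmono (Set.self_mem_Ici) (le_of_lt hx) hx
  have hF0 : F 0 = - (Real.pi / 2) := by
    simp [hF, Real.arctan_one]
    ring
  rw [hF0] at h0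
  simp only [hF] at h0
  linarith [h0, Real.pi_pos]

theorem stmt_8 :
    (∀ x : ℝ, 0 < x →
      2 * (Real.arctan (1 + 2 * x) - Real.pi / 4) < Real.log (1 + 2 * x)) ∧
    (∀ a b : ℝ, 0 < a → 0 < b → a ≠ b →
      |b - a| / Real.log (1 + |Real.log b - Real.log a|) <
        |b - a| / (2 * Real.arctan (1 + |Real.log b - Real.log a|) - Real.pi / 2)) := by
  constructor
  · exact key
  · intro a b ha hb hab
    set L := |Real.log b - Real.log a| with hL
    have hLpos : 0 < L := by
      rw [hL, abs_pos, sub_ne_zero]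
      exact fun h => hab (Real.log_injOn_pos (Set.mem_Ioi.mpr hb) (Set.mem_Ioi.mpr ha) h).symm
    have hkey := key (L / 2) (by linarith)
    have hL2 : 1 + 2 * (L / 2) = 1 + L := by ring
    rw [hL2] at hkey
    have hden1 : 0 < 2 * Real.arctan (1 + L) - Real.pi / 2 := by
      have : Real.arctan 1 < Real.arctan (1 + L) := Real.arctan_strictMono (by linarith)
      rw [Real.arctan_one] at this
      linarith
    have hden2 : 2 * Real.arctan (1 + L) - Real.pi / 2 < Real.log (1 + L) := by linarith
    have habs : 0 < |b - a| := by
      rw [abs_pos, sub_ne_zero]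
      exact Ne.symm hab
    exact div_lt_div_of_pos_left habs hden1 hden2
end

section
/- For all x > 0, √2·sinh(x)/arcsinh(x√2) < cosh(x); that is, M_4(a,b) < (a+b)/2 for all positive a ≠ b, where M_4(a,b) = (b−a)/(√2·arcsinh((ln b − ln a)/√2)). -/
open Real Set

lemma gderiv (x : ℝ) : HasDerivAt (fun x : ℝ => arsinh (x * √2) - √2 * tanh x)
    ((√(1 + (x*√2)^2))⁻¹ * √2 - √2 * ((cosh x * cosh x - sinh x * sinh x)/(cosh x)^2)) x := by
  have h1 : HasDerivAt (fun x : ℝ => arsinh (x * √2)) ((√(1 + (x*√2)^2))⁻¹ * √2) x :=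
    by
      have h := (Real.hasDerivAt_arsinh (x*√2)).comp x ((hasDerivAt_id x).mul_const (√2))
      exact h.congr_deriv (by ring)
  have h2 : HasDerivAt (fun x : ℝ => tanh x)
      ((cosh x * cosh x - sinh x * sinh x)/(cosh x)^2) x := by
    have := (Real.hasDerivAt_sinh x).div (Real.hasDerivAt_cosh x) ((Real.cosh_pos x).ne')
    have e : (fun x : ℝ => tanh x) = sinh / cosh := by funext y; exact Real.tanh_eq_sinh_div_cosh y
    rw [e]; exact this
  exact h1.sub (h2.const_mul (√2))

lemma gpos {x : ℝ} (hx : 0 < x) : √2 * tanh x < arsinh (x * √2) := by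
  have hmono : StrictMonoOn (fun x : ℝ => arsinh (x * √2) - √2 * tanh x) (Ici 0) := by
    apply strictMonoOn_of_deriv_pos (convex_Ici 0)
    · exact Continuous.continuousOn (by
        have : Continuous Real.tanh := (Real.continuous_sinh.div Real.continuous_cosh (fun x => (Real.cosh_pos x).ne')).congr fun x => (Real.tanh_eq_sinh_div_cosh x).symm
        continuity)
    · intro y hy
      rw [interior_Ici] at hy
      rw [(gderiv y).deriv]
      have hcs : cosh y * cosh y - sinh y * sinh y = 1 := by
        have := Real.cosh_sq_sub_sinh_sq y; nlinarith [this]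
      rw [hcs]
      have hy' : 0 < y := hy
      have hc1 : 1 + y^2 < (cosh y)^2 := by
        have h1 := Real.self_lt_sinh_iff.2 hy'
        have h2 := Real.cosh_sq y
        nlinarith [sq_nonneg y, mul_self_lt_mul_self hy'.le h1]
      have hs : √(1 + (y*√2)^2) < (cosh y)^2 := by
        have h2 : (y*√2)^2 = 2 * y^2 := by
          have : (√2)^2 = 2 := Real.sq_sqrt (by norm_num)
          nlinarith
        rw [h2]
        have : √(1 + 2*y^2) < 1 + y^2 := by
          rw [show (1:ℝ) + y^2 = √((1+y^2)^2) by
            rw [Real.sqrt_sq (by positivity)]]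
          apply Real.sqrt_lt_sqrt (by positivity)
          nlinarith [pow_pos hy' 4]
        linarith
      have hspos : 0 < √(1 + (y*√2)^2) := Real.sqrt_pos.2 (by positivity)
      have hinv : ((cosh y)^2)⁻¹ < (√(1 + (y*√2)^2))⁻¹ := by
        apply inv_strictAnti₀ hspos hs
      have h2pos : (0:ℝ) < √2 := by positivity
      have : √2 * (1/(cosh y)^2) < (√(1 + (y*√2)^2))⁻¹ * √2 := by
        rw [one_div]
        nlinarith
      linarith [this]
  have := hmono (Set.mem_Ici.2 le_rfl) (Set.mem_Ici.2 hx.le) hx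
  simpa using this

lemma key_s10 {x : ℝ} (hx : 0 < x) :
    √2 * sinh x / arsinh (x * √2) < cosh x := by
  have hA : 0 < arsinh (x * √2) := Real.arsinh_pos_iff.2 (by positivity)
  rw [div_lt_iff₀ hA]
  have := gpos hx
  have hc : 0 < cosh x := Real.cosh_pos x
  have ht : tanh x = sinh x / cosh x := Real.tanh_eq_sinh_div_cosh x
  rw [ht] at this
  calc √2 * sinh x = (√2 * (sinh x / cosh x)) * cosh x := by field_simp
    _ < cosh x * arsinh (x * √2) := by nlinarith

lemma part2 {a b : ℝ} (ha : 0 < a) (hab : a < b) :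
    (b - a) / (√2 * arsinh ((Real.log b - Real.log a) / √2)) < (a + b) / 2 := by
  have hb : 0 < b := lt_trans ha hab
  set x := (Real.log b - Real.log a) / 2 with hxdef
  set m := (Real.log a + Real.log b) / 2 with hmdef
  have hx : 0 < x := by
    have := Real.log_lt_log ha hab
    simp [hxdef]; linarith
  have hs2 : (√2 : ℝ) ≠ 0 := by positivity
  have hs2sq : (√2:ℝ) * √2 = 2 := Real.mul_self_sqrt (by norm_num)
  have harg : (Real.log b - Real.log a) / √2 = x * √2 := by
    field_simp [hxdef]; ring_nf; nlinarith [hs2sq]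
  have haexp : a = Real.exp (m - x) := by
    rw [← Real.exp_log ha]; congr 1; simp [hmdef, hxdef]; ring
  have hbexp : b = Real.exp (m + x) := by
    rw [← Real.exp_log hb]; congr 1; simp [hmdef, hxdef]; ring
  have hgen1 : ∀ u v : ℝ, Real.exp (u+v) - Real.exp (u-v) = Real.exp u * (2 * sinh v) := by
    intro u v
    rw [Real.sinh_eq, Real.exp_add, Real.exp_sub, Real.exp_neg]
    have := (Real.exp_pos v).ne'
    field_simp
  have hgen2 : ∀ u v : ℝ, (Real.exp (u-v) + Real.exp (u+v))/2 = Real.exp u * cosh v := by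
    intro u v
    rw [Real.cosh_eq, Real.exp_add, Real.exp_sub, Real.exp_neg]
    have := (Real.exp_pos v).ne'
    field_simp
    ring
  have hba : b - a = Real.exp m * (2 * sinh x) := by rw [haexp, hbexp, hgen1]
  have hab2 : (a + b)/2 = Real.exp m * cosh x := by rw [haexp, hbexp, hgen2]
  rw [harg, hba, hab2]
  have hA : 0 < arsinh (x * √2) := Real.arsinh_pos_iff.2 (by positivity)
  have hkey := key_s10 hx
  rw [div_lt_iff₀ hA] at hkey
  rw [div_lt_iff₀ (by positivity : (0:ℝ) < √2 * arsinh (x*√2))]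
  have hem : 0 < Real.exp m := Real.exp_pos m
  calc Real.exp m * (2 * sinh x) = Real.exp m * (√2 * (√2 * sinh x)) := by
        rw [← mul_assoc (√2), hs2sq]
    _ < Real.exp m * (√2 * (cosh x * arsinh (x*√2))) := by
        apply mul_lt_mul_of_pos_left _ hem
        apply mul_lt_mul_of_pos_left hkey (by positivity)
    _ = Real.exp m * cosh x * (√2 * arsinh (x*√2)) := by ring

theorem stmt_10 :
    (∀ x : ℝ, 0 < x →
      Real.sqrt 2 * Real.sinh x / Real.arsinh (x * Real.sqrt 2) < Real.cosh x) ∧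
    (∀ a b : ℝ, 0 < a → 0 < b → a ≠ b →
      (b - a) / (Real.sqrt 2 * Real.arsinh ((Real.log b - Real.log a) / Real.sqrt 2)) <
        (a + b) / 2) := by
  constructor
  · exact fun x hx => key_s10 hx
  · intro a b ha hb hne
    rcases lt_or_gt_of_ne hne with h | h
    · exact part2 ha h
    · have := part2 hb h
      have heq : (b - a) / (√2 * arsinh ((Real.log b - Real.log a) / √2))
          = (a - b) / (√2 * arsinh ((Real.log a - Real.log b) / √2)) := by
        rw [show (Real.log b - Real.log a) / √2 = -((Real.log a - Real.log b) / √2) by ring,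
          Real.arsinh_neg]
        rw [show b - a = -(a-b) by ring]
        rw [mul_neg, neg_div_neg_eq]
      rw [heq]
      linarith
end

section
/- Let r > 0 and α ≤ 0 with α + r ≠ 0, and define M_{α,r}(a,b) = (r+α)|b−a| / ((1+r|ln b − ln a|)^{(r+α)/r} − 1) for positive a ≠ b. Then M_{α,r}(a,b) > √(ab) for all positive a ≠ b. -/
open Real

/-- Bernoulli-type bound for negative exponents. -/
lemma bern_neg {y p : ℝ} (hy : 0 < y) (hp : p < 0) :
    1 + p * y ≤ (1 + y) ^ p := by
  have h1 : (0:ℝ) < 1 + y := by linarith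
  rw [Real.rpow_def_of_pos h1, mul_comm (Real.log (1 + y)) p]
  have hlog : Real.log (1 + y) ≤ y := by
    have := Real.log_le_sub_one_of_pos h1
    linarith
  have h2 : p * y ≤ p * Real.log (1 + y) := by
    nlinarith
  calc 1 + p * y ≤ 1 + p * Real.log (1 + y) := by linarith
    _ ≤ Real.exp (p * Real.log (1 + y)) := by
        have := Real.add_one_le_exp (p * Real.log (1 + y)); linarith

/-- The core scalar inequality. -/
lemma arith_key (r α x s : ℝ) (hr : 0 < r) (hα : α ≤ 0) (hαr : α + r ≠ 0)
    (hx : 0 < x) (hs : 2 * x < s) :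
    1 < (r + α) * s / ((1 + r * (2 * x)) ^ ((r + α) / r) - 1) := by
  set p : ℝ := (r + α) / r with hp
  have hy : 0 < r * (2 * x) := by positivity
  rcases lt_or_gt_of_ne (by simpa [add_comm] using hαr) with hc | hc
  · -- r + α < 0, p < 0
    have hpneg : p < 0 := div_neg_of_neg_of_pos hc hr
    have hD : (1 + r * (2 * x)) ^ p - 1 < 0 := by
      have : (1 + r * (2 * x)) ^ p < 1 :=
        Real.rpow_lt_one_of_one_lt_of_neg (by linarith) hpneg
      linarith
    rw [lt_div_iff_of_neg hD]
    have hb := bern_neg hy hpneg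
    have hpy : p * (r * (2 * x)) = (r + α) * (2 * x) := by
      field_simp [hp]
      rw [hp]; field_simp
    have hstep : (r + α) * s < (r + α) * (2 * x) := by nlinarith
    nlinarith
  · -- 0 < r + α, 0 < p ≤ 1
    have hppos : 0 < p := div_pos hc hr
    have hple : p ≤ 1 := by
      rw [hp, div_le_one hr]; linarith
    have hD : 0 < (1 + r * (2 * x)) ^ p - 1 := by
      have : 1 < (1 + r * (2 * x)) ^ p := by
        have := Real.one_lt_rpow_iff_of_pos (x := 1 + r * (2 * x)) (by linarith) (y := p)
        exact this.mpr (Or.inl ⟨by linarith, hppos⟩)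
      linarith
    rw [lt_div_iff₀ hD, one_mul]
    have hb := rpow_one_add_le_one_add_mul_self (s := r * (2 * x)) (by linarith) hppos.le hple
    have hpy : p * (r * (2 * x)) = (r + α) * (2 * x) := by
      field_simp [hp]
      rw [hp]; field_simp
    nlinarith

/-- Main inequality under the extra assumption `a < b`. -/
lemma main_lt_s13 (r α : ℝ) (hr : 0 < r) (hα : α ≤ 0) (hαr : α + r ≠ 0)
    (a b : ℝ) (ha : 0 < a) (hb : 0 < b) (hab : a < b) :
    (r + α) * |b - a| / ((1 + r * |Real.log b - Real.log a|) ^ ((r + α) / r) - 1) >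
      Real.sqrt (a * b) := by
  set x : ℝ := (Real.log b - Real.log a) / 2 with hxdef
  have hx : 0 < x := by
    have := Real.log_lt_log ha hab
    simp only [hxdef]; linarith
  set m : ℝ := (Real.log a + Real.log b) / 2 with hmdef
  have hA : a = Real.exp (m - x) := by
    rw [show m - x = Real.log a by rw [hmdef, hxdef]; ring, Real.exp_log ha]
  have hB : b = Real.exp (m + x) := by
    rw [show m + x = Real.log b by rw [hmdef, hxdef]; ring, Real.exp_log hb]
  have hsqrt : Real.sqrt (a * b) = Real.exp m := by
    rw [hA, hB, ← Real.exp_add]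
    rw [show m - x + (m + x) = m + m by ring, Real.exp_add]
    exact Real.sqrt_mul_self (Real.exp_pos m).le
  have habs1 : |b - a| = Real.exp m * (Real.exp x - Real.exp (-x)) := by
    rw [abs_of_pos (by linarith), hA, hB, show m + x = m + x from rfl]
    rw [show m - x = m + -x by ring, Real.exp_add, Real.exp_add]
    ring
  have habs2 : |Real.log b - Real.log a| = 2 * x := by
    rw [abs_of_pos (by simp only [hxdef] at hx; linarith)]
    rw [hxdef]; ring
  have hsinh : 2 * x < Real.exp x - Real.exp (-x) := by
    have h1 := Real.self_lt_sinh_iff.mpr hx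
    rw [Real.sinh_eq] at h1
    linarith
  have hkey := arith_key r α x (Real.exp x - Real.exp (-x)) hr hα hαr hx hsinh
  rw [habs1, habs2, hsqrt]
  have hEm : 0 < Real.exp m := Real.exp_pos m
  calc Real.exp m = Real.exp m * 1 := by ring
    _ < Real.exp m *
        ((r + α) * (Real.exp x - Real.exp (-x)) /
          ((1 + r * (2 * x)) ^ ((r + α) / r) - 1)) := by
        exact (mul_lt_mul_iff_right₀ hEm).mpr hkey
    _ = (r + α) * (Real.exp m * (Real.exp x - Real.exp (-x))) /
          ((1 + r * (2 * x)) ^ ((r + α) / r) - 1) := by ring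

theorem stmt_13 (r α : ℝ) (hr : 0 < r) (hα : α ≤ 0) (hαr : α + r ≠ 0)
    (a b : ℝ) (ha : 0 < a) (hb : 0 < b) (hab : a ≠ b) :
    (r + α) * |b - a| / ((1 + r * |Real.log b - Real.log a|) ^ ((r + α) / r) - 1) >
      Real.sqrt (a * b) := by
  rcases lt_or_gt_of_ne hab with h | h
  · exact main_lt_s13 r α hr hα hαr a b ha hb h
  · rw [abs_sub_comm b a, abs_sub_comm (Real.log b) (Real.log a), mul_comm a b]
    exact main_lt_s13 r α hr hα hαr b a hb ha h
end

section
/- Let r > 0 and 0 ≤ α ≤ 1, and define M_{α,r}(a,b) = (r+α)|b−a| / ((1+r|ln b − ln a|)^{(r+α)/r} − 1) for positive a ≠ b. Then M_{α,r}(a,b) < (a+b)/2 for all positive a ≠ b. -/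
open Real in
lemma log_gt_aux (x : ℝ) (hx : 1 < x) : 2 * (x - 1) / (x + 1) < Real.log x := by
  have h0 : (0:ℝ) < x := by linarith
  set f : ℝ → ℝ := fun y => Real.log y - 2 * (y - 1) / (y + 1) with hf
  have hmono : StrictMonoOn f (Set.Ici 1) := by
    apply strictMonoOn_of_deriv_pos (convex_Ici 1)
    · apply ContinuousOn.sub
      · exact Real.continuousOn_log.mono (by intro y hy; simp at hy ⊢; linarith)
      · apply ContinuousOn.div
        · fun_prop
        · fun_prop
        · intro y hy; simp at hy; intro h; linarith
    · intro y hy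
      rw [interior_Ici] at hy
      have hy1 : (1:ℝ) < y := hy
      have hy0 : (0:ℝ) < y := by linarith
      have hd1 : HasDerivAt Real.log y⁻¹ y := Real.hasDerivAt_log hy0.ne'
      have hd2 : HasDerivAt (fun y : ℝ => 2 * (y - 1) / (y + 1))
          ((2 * 1 * (y + 1) - 2 * (y - 1) * 1) / (y + 1) ^ 2) y := by
        exact (((hasDerivAt_id y).sub_const 1).const_mul 2).div
          ((hasDerivAt_id y).add_const 1) (by positivity)
      have hd : HasDerivAt f (y⁻¹ - (2 * 1 * (y + 1) - 2 * (y - 1) * 1) / (y + 1) ^ 2) y :=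
        hd1.sub hd2
      rw [hd.deriv]
      have h1 : (2 * 1 * (y + 1) - 2 * (y - 1) * 1) / (y + 1) ^ 2 = 4 / (y + 1) ^ 2 := by
        ring_nf
      rw [h1, sub_pos, div_lt_iff₀ (by positivity), inv_mul_eq_div, lt_div_iff₀ hy0]
      nlinarith [sq_nonneg (y - 1)]
  have h := hmono (Set.self_mem_Ici) (Set.mem_Ici.2 hx.le) hx
  have hf1 : f 1 = 0 := by simp [hf]
  have hfx : f x = Real.log x - 2 * (x - 1) / (x + 1) := rfl
  rw [hf1, hfx] at h
  linarith

theorem stmt_14 (r α : ℝ) (hr : 0 < r) (hα0 : 0 ≤ α) (hα1 : α ≤ 1)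
    (a b : ℝ) (ha : 0 < a) (hb : 0 < b) (hab : a ≠ b) :
    (r + α) * |b - a| / ((1 + r * |Real.log b - Real.log a|) ^ ((r + α) / r) - 1) <
      (a + b) / 2 := by
  wlog hlt : a < b with H
  · have hba : b < a := lt_of_le_of_ne (not_lt.1 hlt) (Ne.symm hab)
    have := H r α hr hα0 hα1 b a hb ha hab.symm hba
    rwa [abs_sub_comm a b, abs_sub_comm (Real.log a), add_comm b a] at this
  have ht0 : 0 < Real.log b - Real.log a := sub_pos.2 (Real.log_lt_log ha hlt)
  set t := Real.log b - Real.log a with ht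
  clear_value t
  have habs1 : |b - a| = b - a := abs_of_pos (by linarith)
  have habs2 : |t| = t := abs_of_pos ht0
  rw [habs1, habs2]
  have hs : 1 ≤ (r + α) / r := by rw [le_div_iff₀ hr]; linarith
  have hrt : (0:ℝ) ≤ r * t := by positivity
  have hB := one_add_mul_self_le_rpow_one_add (s := r * t) (by linarith) hs
  have hre : (r + α) / r * (r * t) = (r + α) * t := by field_simp
  rw [hre] at hB
  have hrα : 0 < r + α := by linarith
  have hD : (r + α) * t ≤ (1 + r * t) ^ ((r + α) / r) - 1 := by linarith
  have hDpos : 0 < (1 + r * t) ^ ((r + α) / r) - 1 :=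
    lt_of_lt_of_le (by positivity) hD
  rw [div_lt_iff₀ hDpos]
  -- key inequality: 2 * (b - a) < t * (a + b)
  have hx : 1 < b / a := (one_lt_div ha).2 hlt
  have hkey := log_gt_aux (b / a) hx
  rw [Real.log_div hb.ne' ha.ne', ← ht] at hkey
  rw [div_lt_iff₀ (by positivity : (0:ℝ) < b / a + 1)] at hkey
  have h2 : 2 * (b - a) < t * (a + b) := by
    have := mul_lt_mul_of_pos_right hkey ha
    have hae : (b / a - 1) * a = b - a := by field_simp
    have hae2 : (b / a + 1) * a = b + a := by field_simp
    nlinarith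
  calc (r + α) * (b - a) < (a + b) / 2 * ((r + α) * t) := by nlinarith [mul_lt_mul_of_pos_left h2 hrα]
    _ ≤ (a + b) / 2 * ((1 + r * t) ^ ((r + α) / r) - 1) := by
        apply mul_le_mul_of_nonneg_left hD (by positivity)
end

section
/- For every homogeneous symmetric bivariate mean m on positive reals and all a, b > 0, the resultant mean-map satisfies R(A,m,G)(a,b) = A(√a,√b) · m(√a,√b), where R(A,m,G)(a,b) = A(m(a, G(a,b)), m(G(a,b), b)), A is the arithmetic mean and G the geometric mean. -/
theorem stmt_15 (m : ℝ → ℝ → ℝ)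
    (hmean : ∀ a b : ℝ, 0 < a → 0 < b → min a b ≤ m a b ∧ m a b ≤ max a b)
    (hsymm : ∀ a b : ℝ, 0 < a → 0 < b → m a b = m b a)
    (hhom : ∀ lam a b : ℝ, 0 < lam → 0 < a → 0 < b → m (lam * a) (lam * b) = lam * m a b)
    (a b : ℝ) (ha : 0 < a) (hb : 0 < b) :
    (m a (Real.sqrt (a * b)) + m (Real.sqrt (a * b)) b) / 2 =
      (Real.sqrt a + Real.sqrt b) / 2 * m (Real.sqrt a) (Real.sqrt b) := by
  have hsa : 0 < Real.sqrt a := Real.sqrt_pos.mpr ha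
  have hsb : 0 < Real.sqrt b := Real.sqrt_pos.mpr hb
  have hab : Real.sqrt (a * b) = Real.sqrt a * Real.sqrt b :=
    Real.sqrt_mul ha.le b
  have h1 : m a (Real.sqrt (a * b)) = Real.sqrt a * m (Real.sqrt a) (Real.sqrt b) := by
    have : a = Real.sqrt a * Real.sqrt a := (Real.mul_self_sqrt ha.le).symm
    rw [hab]
    nth_rewrite 1 [this]
    exact hhom _ _ _ hsa hsa hsb
  have h2 : m (Real.sqrt (a * b)) b = Real.sqrt b * m (Real.sqrt a) (Real.sqrt b) := by
    have step : m (Real.sqrt (a * b)) b = m (Real.sqrt b * Real.sqrt a) (Real.sqrt b * Real.sqrt b) := by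
      rw [hab, Real.mul_self_sqrt hb.le, mul_comm]
    rw [step, hhom _ _ _ hsb hsa hsb]
  rw [h1, h2]
  ring
end

section
/- For 0 < α ≤ √2/2 and all positive a ≠ b, R(A,S_α,G)(a,b) < S_α(a,b), where S_α(a,b) = α(b−a)/(2·arctan((b^α−a^α)/(b^α+a^α))), A is the arithmetic mean, G the geometric mean, and R(K,M,N)(a,b) = K(M(a,N(a,b)), M(N(a,b),b)). In particular, the key scalar inequality is arctan(tanh(αx)) − 2·arctan(tanh(αx/2)) < 0 for all x > 0. -/
open Real

/-- Key scalar lemma: for `0 < u < 1`, `arctan (2u/(1+u²)) < 2 arctan u`. -/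
lemma aux_arctan_double (u : ℝ) (hu0 : 0 < u) (hu1 : u < 1) :
    Real.arctan (2 * u / (1 + u ^ 2)) < 2 * Real.arctan u := by
  have huu : u * u < 1 := by nlinarith
  have hadd := Real.arctan_add huu
  have h2 : 2 * Real.arctan u = Real.arctan ((u + u) / (1 - u * u)) := by
    rw [← hadd]; ring
  rw [h2]
  apply Real.arctan_strictMono
  have h1 : (0:ℝ) < 1 - u * u := by nlinarith
  have h3 : (0:ℝ) < 1 + u ^ 2 := by positivity
  have h4 : 1 - u * u < 1 + u ^ 2 := by nlinarith
  calc 2 * u / (1 + u ^ 2) < 2 * u / (1 - u * u) :=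
        div_lt_div_of_pos_left (by linarith) h1 h4
    _ = (u + u) / (1 - u * u) := by ring_nf

lemma aux_tanh_pos {x : ℝ} (hx : 0 < x) : 0 < Real.tanh x := by
  rw [Real.tanh_eq_sinh_div_cosh]
  exact div_pos (by rwa [Real.sinh_pos_iff]) (Real.cosh_pos x)

lemma aux_tanh_lt_one (x : ℝ) : Real.tanh x < 1 := by
  rw [Real.tanh_eq_sinh_div_cosh, div_lt_one (Real.cosh_pos x)]
  exact Real.sinh_lt_cosh x

lemma aux_tanh_two_mul (s : ℝ) :
    Real.tanh (2 * s) = 2 * Real.tanh s / (1 + Real.tanh s ^ 2) := by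
  have hc := (Real.cosh_pos s).ne'
  have hc2 := (Real.cosh_pos (2 * s)).ne'
  rw [Real.tanh_eq_sinh_div_cosh, Real.tanh_eq_sinh_div_cosh,
    Real.sinh_two_mul, Real.cosh_two_mul]
  have hsq : Real.cosh s ^ 2 = Real.sinh s ^ 2 + 1 := Real.cosh_sq s
  field_simp

lemma aux_arctan_pos {x : ℝ} (hx : 0 < x) : 0 < Real.arctan x := by
  simpa using Real.arctan_strictMono hx

theorem stmt_16 (α : ℝ) (hα : 0 < α) (hα2 : α ≤ Real.sqrt 2 / 2) :
    (∀ x : ℝ, 0 < x →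
      Real.arctan (Real.tanh (α * x)) - 2 * Real.arctan (Real.tanh (α * x / 2)) < 0) ∧
    (∀ a b : ℝ, 0 < a → 0 < b → a ≠ b →
      (let S : ℝ → ℝ → ℝ := fun u v =>
        α * (v - u) / (2 * Real.arctan ((v ^ α - u ^ α) / (v ^ α + u ^ α)));
      (S a (Real.sqrt (a * b)) + S (Real.sqrt (a * b)) b) / 2 < S a b)) := by
  constructor
  · intro x hx
    have hs : 0 < α * x / 2 := by positivity
    set u := Real.tanh (α * x / 2) with hu
    have hu0 : 0 < u := aux_tanh_pos hs
    have hu1 : u < 1 := aux_tanh_lt_one _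
    have hid : Real.tanh (α * x) = 2 * u / (1 + u ^ 2) := by
      have : α * x = 2 * (α * x / 2) := by ring
      rw [this, aux_tanh_two_mul]
    rw [hid]
    have := aux_arctan_double u hu0 hu1
    linarith
  · -- main inequality, reduced to the scalar lemma
    have key : ∀ a b : ℝ, 0 < a → 0 < b → a < b →
        (let S : ℝ → ℝ → ℝ := fun u v =>
          α * (v - u) / (2 * Real.arctan ((v ^ α - u ^ α) / (v ^ α + u ^ α)));
        (S a (Real.sqrt (a * b)) + S (Real.sqrt (a * b)) b) / 2 < S a b) := by
      intro a b ha hb hab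
      intro S
      set g := Real.sqrt (a * b) with hg
      have hg0 : 0 < g := Real.sqrt_pos.mpr (by positivity)
      set p := a ^ (α / 2) with hp
      set q := b ^ (α / 2) with hq
      have hp0 : 0 < p := Real.rpow_pos_of_pos ha _
      have hq0 : 0 < q := Real.rpow_pos_of_pos hb _
      have hpq : p < q := Real.rpow_lt_rpow ha.le hab (by positivity)
      have haα : a ^ α = p ^ 2 := by
        rw [hp, ← Real.rpow_natCast (a ^ (α/2)) 2, ← Real.rpow_mul ha.le]
        norm_num
      have hbα : b ^ α = q ^ 2 := by
        rw [hq, ← Real.rpow_natCast (b ^ (α/2)) 2, ← Real.rpow_mul hb.le]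
        norm_num
      have hgα : g ^ α = p * q := by
        rw [hg, Real.sqrt_eq_rpow, ← Real.rpow_mul (by positivity : (0:ℝ) ≤ a * b),
          hp, hq, ← Real.mul_rpow ha.le hb.le]
        norm_num
        congr 1
        ring
      set u := (q - p) / (q + p) with hu
      have hqp0 : 0 < q + p := by linarith
      have hu0 : 0 < u := div_pos (by linarith) hqp0
      have hu1 : u < 1 := (div_lt_one hqp0).mpr (by linarith)
      -- the two half arguments both equal u
      have harg1 : (g ^ α - a ^ α) / (g ^ α + a ^ α) = u := by
        rw [hgα, haα, hu]
        rw [show p * q - p ^ 2 = p * (q - p) by ring, show p * q + p ^ 2 = p * (q + p) by ring,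
          mul_div_mul_left _ _ hp0.ne']
      have harg2 : (b ^ α - g ^ α) / (b ^ α + g ^ α) = u := by
        rw [hgα, hbα, hu]
        rw [show q ^ 2 - p * q = q * (q - p) by ring, show q ^ 2 + p * q = q * (q + p) by ring,
          mul_div_mul_left _ _ hq0.ne']
      have harg3 : (b ^ α - a ^ α) / (b ^ α + a ^ α) = 2 * u / (1 + u ^ 2) := by
        rw [haα, hbα, hu]
        have h1 : (0:ℝ) < q ^ 2 + p ^ 2 := by positivity
        field_simp
        ring
      have ht2 : 0 < Real.arctan u := aux_arctan_pos hu0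
      have ht1 : 0 < Real.arctan (2 * u / (1 + u ^ 2)) :=
        aux_arctan_pos (by positivity)
      have hkey : Real.arctan (2 * u / (1 + u ^ 2)) < 2 * Real.arctan u :=
        aux_arctan_double u hu0 hu1
      show (α * (g - a) / (2 * Real.arctan ((g ^ α - a ^ α) / (g ^ α + a ^ α)))
          + α * (b - g) / (2 * Real.arctan ((b ^ α - g ^ α) / (b ^ α + g ^ α)))) / 2
          < α * (b - a) / (2 * Real.arctan ((b ^ α - a ^ α) / (b ^ α + a ^ α)))
      rw [harg1, harg2, harg3]
      set t2 := Real.arctan u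
      set t1 := Real.arctan (2 * u / (1 + u ^ 2))
      have hsum : (α * (g - a) / (2 * t2) + α * (b - g) / (2 * t2)) / 2
          = α * (b - a) / (4 * t2) := by
        field_simp
        ring
      rw [hsum]
      have hnum : 0 < α * (b - a) := by
        apply mul_pos hα; linarith
      calc α * (b - a) / (4 * t2) < α * (b - a) / (2 * t1) :=
            div_lt_div_of_pos_left hnum (by linarith) (by linarith)
        _ = α * (b - a) / (2 * t1) := rfl
    intro a b ha hb hab
    rcases lt_or_gt_of_ne hab with h | h
    · exact key a b ha hb h
    · -- symmetric case: swap a and b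
      have hk := key b a hb ha h
      intro S
      have hSsymm : ∀ u v : ℝ, S u v = S v u := by
        intro u v
        show α * (v - u) / (2 * Real.arctan ((v ^ α - u ^ α) / (v ^ α + u ^ α)))
          = α * (u - v) / (2 * Real.arctan ((u ^ α - v ^ α) / (u ^ α + v ^ α)))
        rw [show (u ^ α - v ^ α) / (u ^ α + v ^ α)
            = -((v ^ α - u ^ α) / (v ^ α + u ^ α)) by
              rw [add_comm (u ^ α), ← neg_div, neg_sub],
          Real.arctan_neg, mul_neg, div_neg]
        ring
      simp only [mul_comm b a] at hk
      calc (S a (Real.sqrt (a * b)) + S (Real.sqrt (a * b)) b) / 2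
          = (S b (Real.sqrt (a * b)) + S (Real.sqrt (a * b)) a) / 2 := by
            rw [hSsymm a _, hSsymm _ b]; ring
        _ < S b a := hk
        _ = S a b := hSsymm b a
end

section
/- For 0 < α < 1/2 and all x > 0, sinh(2αx) > 2·sinh(αx); consequently, for the mean L_α(a,b) = 2α·a^α·b^α·(b−a)/(b^{2α}−a^{2α}), one has L_α(a,b) < R(A,L_α,G)(a,b) for all positive a ≠ b, where A is the arithmetic mean, G the geometric mean, and R(K,M,N)(a,b) = K(M(a,N(a,b)), M(N(a,b),b)). -/
set_option maxHeartbeats 1000000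
open Real

lemma key_s17 (α a b : ℝ) (hα : 0 < α) (ha : 0 < a) (hab : a < b) :
    2 * α * a ^ α * b ^ α * (b - a) / (b ^ (2*α) - a ^ (2*α)) <
      (2 * α * a ^ α * (Real.sqrt (a*b)) ^ α * (Real.sqrt (a*b) - a) /
          ((Real.sqrt (a*b)) ^ (2*α) - a ^ (2*α)) +
        2 * α * (Real.sqrt (a*b)) ^ α * b ^ α * (b - Real.sqrt (a*b)) /
          (b ^ (2*α) - (Real.sqrt (a*b)) ^ (2*α))) / 2 := by
  have hb : 0 < b := ha.trans hab
  set s := Real.sqrt (a*b) with hs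
  have hs0 : 0 < s := Real.sqrt_pos.mpr (by positivity)
  have hs2 : s ^ 2 = a * b := Real.sq_sqrt (by positivity)
  have has : a < s := by nlinarith [sq_nonneg (s - a)]
  have hsb : s < b := by nlinarith [sq_nonneg (s - b)]
  set p := a ^ α with hp
  set q := b ^ α with hq
  set r := s ^ α with hr
  have hp0 : 0 < p := Real.rpow_pos_of_pos ha α
  have hq0 : 0 < q := Real.rpow_pos_of_pos hb α
  have hr0 : 0 < r := Real.rpow_pos_of_pos hs0 α
  have hpq : p < q := Real.rpow_lt_rpow ha.le hab hα
  have hr2 : r ^ 2 = p * q := by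
    rw [hr, hp, hq, ← Real.rpow_natCast (s ^ α) 2, ← Real.rpow_mul hs0.le,
      ← Real.mul_rpow ha.le hb.le]
    push_cast
    rw [mul_comm α 2, Real.rpow_mul (by positivity), Real.rpow_two, hs2]
  have ha2 : a ^ (2*α) = p ^ 2 := by
    rw [hp, mul_comm 2 α, Real.rpow_mul ha.le, ← Real.rpow_natCast (a^α) 2]
    norm_num
  have hb2 : b ^ (2*α) = q ^ 2 := by
    rw [hq, mul_comm 2 α, Real.rpow_mul hb.le, ← Real.rpow_natCast (b^α) 2]
    norm_num
  have hs2' : s ^ (2*α) = p * q := by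
    rw [← hr2, hr, mul_comm 2 α, Real.rpow_mul hs0.le, ← Real.rpow_natCast (s^α) 2]
    norm_num
  rw [ha2, hb2, hs2']
  have hkey : 2 * r < p + q := by
    nlinarith [sq_nonneg (p - q), sq_nonneg (p + q - 2*r)]
  have d1 : 0 < p * q - p ^ 2 := by nlinarith
  have d2 : 0 < q ^ 2 - p * q := by nlinarith
  have d3 : 0 < q ^ 2 - p ^ 2 := by nlinarith
  rw [div_add_div _ _ d1.ne' d2.ne', div_div,
    div_lt_div_iff₀ d3 (by positivity)]
  have h1 : 0 < α * p * q * (q - p) ^ 2 * (b - a) := by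
    have : 0 < q - p := sub_pos.mpr hpq
    have : 0 < b - a := sub_pos.mpr hab
    positivity
  have h2 : 0 < r * (p + q - 2 * r) := by nlinarith
  nlinarith [mul_pos h1 h2, hr2]

theorem stmt_17 (α : ℝ) (hα : 0 < α) (hα2 : α < 1 / 2) :
    (∀ x : ℝ, 0 < x → Real.sinh (2 * α * x) > 2 * Real.sinh (α * x)) ∧
    (∀ a b : ℝ, 0 < a → 0 < b → a ≠ b →
      (let L : ℝ → ℝ → ℝ := fun u v =>
        2 * α * u ^ α * v ^ α * (v - u) / (v ^ (2 * α) - u ^ (2 * α));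
      L a b < (L a (Real.sqrt (a * b)) + L (Real.sqrt (a * b)) b) / 2)) := by
  constructor
  · intro x hx
    have hax : 0 < α * x := by positivity
    have h1 : Real.sinh (2 * α * x) = 2 * Real.sinh (α * x) * Real.cosh (α * x) := by
      rw [show 2 * α * x = 2 * (α * x) by ring, Real.sinh_two_mul]
    have h2 : 1 < Real.cosh (α * x) := Real.one_lt_cosh.mpr hax.ne'
    have h3 : 0 < Real.sinh (α * x) := Real.sinh_pos_iff.mpr hax
    rw [h1]
    nlinarith
  · intro a b ha hb hab
    intro L
    rcases lt_or_gt_of_ne hab with h | h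
    · exact key_s17 α a b hα ha h
    · have := key_s17 α b a hα hb h
      have e1 : L a b = L b a := by
        simp only [L]
        rw [show b - a = -(a - b) by ring, show b^(2*α) - a^(2*α) = -(a^(2*α) - b^(2*α)) by ring,
          div_neg, mul_neg, neg_div, neg_neg]
        ring_nf
      have e2 : Real.sqrt (a*b) = Real.sqrt (b*a) := by rw [mul_comm]
      have e3 : L a (Real.sqrt (a*b)) = L (Real.sqrt (b*a)) a := by
        simp only [L, e2]
        set s := Real.sqrt (b*a)
        rw [show s - a = -(a - s) by ring, show s^(2*α) - a^(2*α) = -(a^(2*α) - s^(2*α)) by ring,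
          mul_neg, neg_div, div_neg, neg_neg]
        ring_nf
      have e4 : L (Real.sqrt (a*b)) b = L b (Real.sqrt (b*a)) := by
        simp only [L, e2]
        set s := Real.sqrt (b*a)
        rw [show b - s = -(s - b) by ring, show b^(2*α) - s^(2*α) = -(s^(2*α) - b^(2*α)) by ring,
          mul_neg, neg_div, div_neg, neg_neg]
        ring_nf
      rw [e1, e3, e4, add_comm]
      exact this
end

section
/- R(A,L,G) = L and R(H,L,A) = L, i.e., for all positive a ≠ b: A(L(a,√(ab)), L(√(ab),b)) = L(a,b) and H(L(a,A(a,b)), L(A(a,b),b)) = L(a,b), where L(a,b) = (b−a)/(ln b − ln a) is the logarithmic mean, A the arithmetic mean, G the geometric mean, and H(a,b) = 2ab/(a+b) the harmonic mean. -/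
theorem stmt_18 (a b : ℝ) (ha : 0 < a) (hb : 0 < b) (hab : a ≠ b) :
    (let L : ℝ → ℝ → ℝ := fun u v => (v - u) / (Real.log v - Real.log u);
     let g := Real.sqrt (a * b);
     let A := (a + b) / 2;
     (L a g + L g b) / 2 = L a b ∧
       2 * (L a A) * (L A b) / (L a A + L A b) = L a b) := by
  intro L g A
  have hinj : ∀ x y : ℝ, 0 < x → 0 < y → x ≠ y → Real.log x ≠ Real.log y := by
    intro x y hx hy hxy h
    exact hxy (Real.log_injOn_pos (Set.mem_Ioi.mpr hx) (Set.mem_Ioi.mpr hy) h)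
  have hd : Real.log b - Real.log a ≠ 0 :=
    sub_ne_zero.mpr (hinj b a hb ha (Ne.symm hab))
  have hA : A = (a + b) / 2 := rfl
  have hApos : 0 < A := by rw [hA]; linarith
  have hAa : A ≠ a := by rw [hA]; intro h; apply hab; linarith [h]
  have hAb : A ≠ b := by rw [hA]; intro h; apply hab; linarith [h]
  have hp : Real.log A - Real.log a ≠ 0 := sub_ne_zero.mpr (hinj A a hApos ha hAa)
  have hq : Real.log b - Real.log A ≠ 0 := sub_ne_zero.mpr (hinj b A hb hApos hAb.symm)
  have hlg : Real.log g = (Real.log a + Real.log b) / 2 := by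
    show Real.log (Real.sqrt (a*b)) = _
    rw [Real.log_sqrt (le_of_lt (mul_pos ha hb)), Real.log_mul (ne_of_gt ha) (ne_of_gt hb)]
  constructor
  · show ((g - a) / (Real.log g - Real.log a) + (b - g) / (Real.log b - Real.log g)) / 2
      = (b - a) / (Real.log b - Real.log a)
    rw [hlg]
    have h1 : (Real.log a + Real.log b) / 2 - Real.log a = (Real.log b - Real.log a) / 2 := by ring
    have h2 : Real.log b - (Real.log a + Real.log b) / 2 = (Real.log b - Real.log a) / 2 := by ring
    rw [h1, h2]
    field_simp
    ring
  · show 2 * ((A - a) / (Real.log A - Real.log a)) * ((b - A) / (Real.log b - Real.log A)) /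
      ((A - a) / (Real.log A - Real.log a) + (b - A) / (Real.log b - Real.log A))
      = (b - a) / (Real.log b - Real.log a)
    have hc : b - a ≠ 0 := sub_ne_zero.mpr (Ne.symm hab)
    have hAa' : A - a = (b - a) / 2 := by rw [hA]; ring
    have hbA : b - A = (b - a) / 2 := by rw [hA]; ring
    set p := Real.log A - Real.log a with hpdef
    set q := Real.log b - Real.log A with hqdef
    have hpq : p + q = Real.log b - Real.log a := by rw [hpdef, hqdef]; ring
    rw [hAa', hbA, ← hpq]
    have hsum : (b - a) / 2 / p + (b - a) / 2 / q = (b - a) / 2 * (p + q) / (p * q) := by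
      field_simp; ring
    rw [hsum]
    have hpq' : p + q ≠ 0 := by rw [hpq]; exact hd
    field_simp
end

section
/- The arithmetic mean A is not comparable to the mean M_1: there exist positive pairs (a,b) and (a',b') with a≠b, a'≠b' such that A(a,b) < M_1(a,b) and A(a',b') > M_1(a',b'), where M_1(a,b) = |b−a|/ln(1+|ln b − ln a|). Equivalently, the function g(x) = ln(1+2x) − 2·tanh(x) satisfies g(2) < 0 and g(x) > 0 for some x > 2. -/
lemma tanh_form (x : ℝ) : Real.tanh x = (Real.exp x - Real.exp (-x)) / (Real.exp x + Real.exp (-x)) := by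
  rw [Real.tanh_eq_sinh_div_cosh, Real.sinh_eq, Real.cosh_eq]
  have h : (0:ℝ) < Real.exp x + Real.exp (-x) := by positivity
  field_simp

lemma log5_lt : Real.log 5 < 1.64 := by
  have h4 : Real.log (5:ℝ) = Real.log 2 + Real.log 2 + Real.log (5/4) := by
    rw [← Real.log_mul (by norm_num) (by norm_num), ← Real.log_mul (by norm_num) (by norm_num)]
    norm_num
  have h1 : Real.log (5/4 : ℝ) ≤ 5/4 - 1 := Real.log_le_sub_one_of_pos (by norm_num)
  have h2 := Real.log_two_lt_d9
  rw [h4]; nlinarith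

lemma two_lt_log201 : (2:ℝ) < Real.log 201 := by
  rw [Real.lt_log_iff_exp_lt (by norm_num)]
  have h : Real.exp 2 = Real.exp 1 * Real.exp 1 := by
    rw [← Real.exp_add]; norm_num
  have := Real.exp_one_lt_d9
  nlinarith [Real.exp_pos 1]

lemma log5_lt_2tanh2 : Real.log 5 < 2 * Real.tanh 2 := by
  rw [tanh_form]
  have h1 : Real.exp 2 = Real.exp 1 * Real.exp 1 := by rw [← Real.exp_add]; norm_num
  have h2 := Real.exp_one_gt_d9
  have h3 : Real.exp (-2:ℝ) = 1 / Real.exp 2 := by rw [Real.exp_neg]; ring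
  have h4 : (0:ℝ) < Real.exp 2 := Real.exp_pos 2
  have h5 : Real.exp 2 > 7.38 := by nlinarith [Real.exp_pos 1]
  have h6 : Real.exp (-2:ℝ) < 0.14 := by rw [h3]; rw [div_lt_iff₀ h4]; nlinarith
  have h7 : (0:ℝ) < Real.exp (-2:ℝ) := Real.exp_pos _
  have h8 := log5_lt
  rw [mul_div_assoc', lt_div_iff₀ (by positivity)]
  nlinarith

theorem stmt_19 :
    (∃ a b : ℝ, 0 < a ∧ 0 < b ∧ a ≠ b ∧
      (a + b) / 2 < |b - a| / Real.log (1 + |Real.log b - Real.log a|)) ∧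
    (∃ a b : ℝ, 0 < a ∧ 0 < b ∧ a ≠ b ∧
      |b - a| / Real.log (1 + |Real.log b - Real.log a|) < (a + b) / 2) ∧
    (Real.log (1 + 2 * 2) - 2 * Real.tanh 2 < 0) ∧
    (∃ x : ℝ, 2 < x ∧ 0 < Real.log (1 + 2 * x) - 2 * Real.tanh x) := by
  refine ⟨⟨1, Real.exp 4, one_pos, Real.exp_pos 4, ?_, ?_⟩,
    ⟨1, Real.exp 200, one_pos, Real.exp_pos 200, ?_, ?_⟩, ?_, ⟨100, by norm_num, ?_⟩⟩
  · intro h; have := Real.exp_one_gt_d9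
    have h4 : Real.exp 4 > 1 := by rw [show (1:ℝ) = Real.exp 0 from Real.exp_zero.symm]; exact Real.exp_lt_exp.mpr (by norm_num)
    linarith [h ▸ h4]
  · have h4 : (1:ℝ) < Real.exp 4 := by rw [show (1:ℝ) = Real.exp 0 from Real.exp_zero.symm]; exact Real.exp_lt_exp.mpr (by norm_num)
    rw [Real.log_exp, Real.log_one]
    rw [abs_of_pos (by linarith), show |(4:ℝ) - 0| = 4 by norm_num, show (1:ℝ)+4 = 5 by norm_num]
    rw [div_lt_div_iff₀ (by norm_num) (Real.log_pos (by norm_num))]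
    have h8 := log5_lt
    have h9 : Real.log (5:ℝ) > 0 := Real.log_pos (by norm_num)
    -- need (1 + exp 4) * log 5 < (exp 4 - 1) * 2
    have h2 : Real.exp 4 = Real.exp 2 * Real.exp 2 := by rw [← Real.exp_add]; norm_num
    have h1 : Real.exp 2 = Real.exp 1 * Real.exp 1 := by rw [← Real.exp_add]; norm_num
    have he := Real.exp_one_gt_d9
    have h5 : Real.exp 2 > 7.38 := by nlinarith [Real.exp_pos 1]
    have h6 : Real.exp 4 > 54 := by nlinarith
    nlinarith
  · intro h
    have h4 : Real.exp 200 > 1 := by rw [show (1:ℝ) = Real.exp 0 from Real.exp_zero.symm]; exact Real.exp_lt_exp.mpr (by norm_num)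
    linarith [h ▸ h4]
  · have h4 : (1:ℝ) < Real.exp 200 := by rw [show (1:ℝ) = Real.exp 0 from Real.exp_zero.symm]; exact Real.exp_lt_exp.mpr (by norm_num)
    rw [Real.log_exp, Real.log_one]
    rw [abs_of_pos (by linarith), show |(200:ℝ) - 0| = 200 by norm_num,
      show (1:ℝ)+200 = 201 by norm_num]
    have h9 := two_lt_log201
    rw [div_lt_div_iff₀ (by linarith) (by norm_num)]
    nlinarith
  · have := log5_lt_2tanh2
    norm_num
    linarith
  · have h1 : Real.tanh 100 < 1 := by
      rw [tanh_form]
      rw [div_lt_one (by positivity)]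
      linarith [Real.exp_pos (-100:ℝ)]
    have h2 : Real.log (1 + 2*100) = Real.log 201 := by norm_num
    rw [h2]
    linarith [two_lt_log201]
end
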